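/- arXiv:1308.4995 — 7 statements merged into one kernel-verified Lean document; each statement's English description precedes it below -/
import Mathlib

section
/- Let E be a complex Banach space and let 𝒳 be a linear subspace of B(E) such that the closure of the unit ball of 𝒳 in the weak operator topology contains a nonzero compact operator. Then 𝒳 is localizing. -/
open Filter Topology

/-- A linear subspace `𝒳 ⊆ B(E)` is *localizing* if there exists a closed ball `B ⊆ E`
with `0 ∉ B` such that for every sequence in `B` there are a subsequence and operators
`X_j ∈ 𝒳` with `‖X_j‖ ≤ 1` such that `X_j x_{n_j}` converges in norm to a nonzero vector. -/
def IsLocalizing {E : Type*} [NormedAddCommGroup E] [NormedSpace ℂ E]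
    (𝒳 : Set (E →L[ℂ] E)) : Prop :=
  ∃ (c : E) (r : ℝ), 0 < r ∧ (0 : E) ∉ Metric.closedBall c r ∧
    ∀ x : ℕ → E, (∀ n, x n ∈ Metric.closedBall c r) →
      ∃ (n : ℕ → ℕ) (X : ℕ → E →L[ℂ] E) (y : E), StrictMono n ∧
        (∀ j, X j ∈ 𝒳) ∧ (∀ j, ‖X j‖ ≤ 1) ∧ y ≠ 0 ∧
        Tendsto (fun j => X j (x (n j))) atTop (𝓝 y)

/-- The closure of a set of operators in the weak operator topology. -/
def wotClosure (E : Type*) [NormedAddCommGroup E] [NormedSpace ℂ E]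
    (S : Set (E →L[ℂ] E)) : Set (E →L[ℂ] E) :=
  {T | (ContinuousLinearMapWOT.ofCLM T : E →WOT[ℂ] E) ∈
    closure ((ContinuousLinearMapWOT.ofCLM : (E →L[ℂ] E) → E →WOT[ℂ] E) '' S)}

/-- Evaluation of a WOT-limit: if `T` lies in the WOT-closure of a convex set `S` of
operators, then for every `v`, `T v` lies in the norm closure of `{X v | X ∈ S}`. -/
lemma apply_mem_closure_of_mem_wotClosure {E : Type*} [NormedAddCommGroup E]
    [NormedSpace ℂ E] {S : Set (E →L[ℂ] E)} (hconv : Convex ℝ S)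
    {T : E →L[ℂ] E} (hT : T ∈ wotClosure E S) (v : E) :
    T v ∈ closure ((fun X : E →L[ℂ] E => X v) '' S) := by
  -- evaluation at `v` into the weak topology is WOT-continuous
  have hg : Continuous fun A : (E →WOT[ℂ] E) => toWeakSpace ℂ E (A v) := by
    apply WeakBilin.continuous_of_continuous_eval
    intro y
    exact ContinuousLinearMapWOT.continuous_dual_apply v y
  have h1 : toWeakSpace ℂ E (T v) ∈
      closure ((fun A : (E →WOT[ℂ] E) => toWeakSpace ℂ E (A v)) ''
        ((ContinuousLinearMapWOT.ofCLM : (E →L[ℂ] E) → E →WOT[ℂ] E) '' S)) := by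
    have := image_closure_subset_closure_image (s := (ContinuousLinearMapWOT.ofCLM : (E →L[ℂ] E) → E →WOT[ℂ] E) '' S) hg
    exact this ⟨(ContinuousLinearMapWOT.ofCLM : (E →L[ℂ] E) → E →WOT[ℂ] E) T, hT, rfl⟩
  have himg : ((fun A : (E →WOT[ℂ] E) => toWeakSpace ℂ E (A v)) ''
      ((ContinuousLinearMapWOT.ofCLM : (E →L[ℂ] E) → E →WOT[ℂ] E) '' S)) =
      toWeakSpace ℂ E '' ((fun X : E →L[ℂ] E => X v) '' S) := by
    rw [Set.image_image, Set.image_image]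
    rfl
  rw [himg] at h1
  -- convexity of the image set
  have hconv' : Convex ℝ ((fun X : E →L[ℂ] E => X v) '' S) := by
    have : IsLinearMap ℝ (fun X : E →L[ℂ] E => X v) :=
      ⟨fun X Y => rfl, fun c X => rfl⟩
    exact hconv.is_linear_image this
  rw [← hconv'.toWeakSpace_closure ℂ] at h1
  obtain ⟨w, hw, hweq⟩ := h1
  rwa [(toWeakSpace ℂ E).injective hweq] at hw

/-- If the WOT-closure of the unit ball of a subspace `𝒳 ⊆ B(E)` contains a nonzero
compact operator, then `𝒳` is localizing. -/
theorem localizing_of_compact_in_wotClosure_ball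
    {E : Type*} [NormedAddCommGroup E] [NormedSpace ℂ E] [CompleteSpace E]
    (𝒳 : Submodule ℂ (E →L[ℂ] E))
    (T : E →L[ℂ] E) (hT : T ∈ wotClosure E {X | X ∈ 𝒳 ∧ ‖X‖ ≤ 1})
    (hTc : IsCompactOperator T) (hT0 : T ≠ 0) :
    IsLocalizing (𝒳 : Set (E →L[ℂ] E)) := by
  set S : Set (E →L[ℂ] E) := {X | X ∈ 𝒳 ∧ ‖X‖ ≤ 1} with hS
  have hSconv : Convex ℝ S := by
    have : S = (𝒳.restrictScalars ℝ : Set (E →L[ℂ] E)) ∩ Metric.closedBall 0 1 := by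
      ext X
      simp [hS, mem_closedBall_zero_iff]
    rw [this]
    exact ((𝒳.restrictScalars ℝ).convex).inter (convex_closedBall 0 1)
  obtain ⟨x₀, hx₀⟩ : ∃ x, T x ≠ 0 := by
    by_contra h
    push_neg at h
    exact hT0 (ContinuousLinearMap.ext fun x => by simp [h x])
  have hTnorm : 0 < ‖T‖ := norm_pos_iff.mpr hT0
  have hx₀0 : x₀ ≠ 0 := fun h => hx₀ (by simp [h])
  have hx₀n : 0 < ‖x₀‖ := norm_pos_iff.mpr hx₀0
  have hTx₀ : 0 < ‖T x₀‖ := norm_pos_iff.mpr hx₀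
  set r : ℝ := min (‖x₀‖ / 2) (‖T x₀‖ / (2 * ‖T‖)) with hr
  have hrpos : 0 < r := lt_min (by positivity) (by positivity)
  have hkey : ∀ z ∈ Metric.closedBall x₀ r, ‖T x₀‖ / 2 ≤ ‖T z‖ := by
    intro z hz
    have h1 : ‖T z - T x₀‖ ≤ ‖T‖ * r := by
      rw [← map_sub]
      calc ‖T (z - x₀)‖ ≤ ‖T‖ * ‖z - x₀‖ := T.le_opNorm _
        _ ≤ ‖T‖ * r := by
            gcongr
            exact mem_closedBall_iff_norm.mp hz
    have h2 : ‖T‖ * r ≤ ‖T x₀‖ / 2 := by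
      calc ‖T‖ * r ≤ ‖T‖ * (‖T x₀‖ / (2 * ‖T‖)) := by
            gcongr
            exact min_le_right _ _
        _ = ‖T x₀‖ / 2 := by field_simp
    have h3 : ‖T x₀‖ - ‖T z‖ ≤ ‖T x₀ - T z‖ := norm_sub_norm_le _ _
    rw [norm_sub_rev] at h3
    linarith
  refine ⟨x₀, r, hrpos, ?_, ?_⟩
  · intro h0
    have := mem_closedBall_iff_norm.mp h0
    rw [zero_sub, norm_neg] at this
    have : ‖x₀‖ ≤ ‖x₀‖ / 2 := this.trans (min_le_left _ _)
    linarith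
  · intro x hx
    -- compactness: extract a convergent subsequence of `T (x n)`
    have hball : Bornology.IsBounded (Metric.closedBall x₀ r) := Metric.isBounded_closedBall
    have hcpt : IsCompact (closure (T '' Metric.closedBall x₀ r)) := by
      have := hTc.isCompact_closure_image_of_bounded (σ₁₂ := RingHom.id ℂ)
        (f := (T : E →ₗ[ℂ] E)) hball
      simpa using this
    have hmem : ∀ k, T (x k) ∈ closure (T '' Metric.closedBall x₀ r) := fun k =>
      subset_closure ⟨x k, hx k, rfl⟩
    obtain ⟨y, -, n, hn, hny⟩ := hcpt.tendsto_subseq hmem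
    have hy0 : y ≠ 0 := by
      intro hy
      have hnorm : Tendsto (fun j => ‖T (x (n j))‖) atTop (𝓝 ‖y‖) := hny.norm
      have hge : ‖T x₀‖ / 2 ≤ ‖y‖ :=
        ge_of_tendsto' hnorm fun j => hkey _ (hx (n j))
      rw [hy, norm_zero] at hge
      linarith
    -- choose approximating operators in the unit ball of 𝒳
    have hchoice : ∀ j : ℕ, ∃ X : E →L[ℂ] E, X ∈ S ∧
        dist (T (x (n j))) (X (x (n j))) < 1 / (j + 1) := by
      intro j
      have hcl := apply_mem_closure_of_mem_wotClosure hSconv hT (x (n j))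
      rw [Metric.mem_closure_iff] at hcl
      obtain ⟨w, ⟨X, hXS, rfl⟩, hwd⟩ := hcl (1 / (j + 1)) (by positivity)
      exact ⟨X, hXS, hwd⟩
    choose X hXS hXd using hchoice
    refine ⟨n, X, y, hn, fun j => (hXS j).1, fun j => (hXS j).2, hy0, ?_⟩
    refine hny.congr_dist ?_
    have h0 : Tendsto (fun j : ℕ => 1 / ((j : ℝ) + 1)) atTop (𝓝 0) :=
      tendsto_one_div_add_atTop_nhds_zero_nat
    exact squeeze_zero (fun j => dist_nonneg) (fun j => (hXd j).le) h0
end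

section
/- Let (Ω, Σ, μ) be a finite measure space with no atoms. Then the algebra {M_φ : φ ∈ L∞(μ)} of all multiplication operators by bounded measurable functions, acting on the Hilbert space L²(μ), is not localizing. -/
open Filter Topology MeasureTheory

section Auxiliary

open Set
open scoped ENNReal NNReal RealInnerProductSpace

section Cells
variable {Ω : Type*}

/-- Dyadic cells determined by a "piece-selection" function `p`. -/
def cellF (p : Set Ω → Set Ω) : (n : ℕ) → (Fin n → Bool) → Set Ω
  | 0, _ => Set.univ
  | n + 1, b =>
      if b (Fin.last n) then p (cellF p n (Fin.init b))
      else cellF p n (Fin.init b) \ p (cellF p n (Fin.init b))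

variable {p : Set Ω → Set Ω}

lemma cellF_succ_subset (hsub : ∀ S, p S ⊆ S) (n : ℕ) (b : Fin (n + 1) → Bool) :
    cellF p (n + 1) b ⊆ cellF p n (Fin.init b) := by
  rw [cellF]
  split_ifs
  · exact hsub _
  · exact diff_subset

lemma cellF_meas [MeasurableSpace Ω] (hm : ∀ S, MeasurableSet S → MeasurableSet (p S)) :
    ∀ (n : ℕ) (b : Fin n → Bool), MeasurableSet (cellF p n b) := by
  intro n
  induction n with
  | zero => intro b; exact MeasurableSet.univ
  | succ n ih =>
    intro b
    rw [cellF]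
    split_ifs
    · exact hm _ (ih _)
    · exact (ih _).diff (hm _ (ih _))

lemma cellF_disj (hsub : ∀ S, p S ⊆ S) :
    ∀ (n : ℕ) (b b' : Fin n → Bool), b ≠ b' →
      Disjoint (cellF p n b) (cellF p n b') := by
  intro n
  induction n with
  | zero => intro b b' hne; exact absurd (Subsingleton.elim b b') hne
  | succ n ih =>
    intro b b' hne
    by_cases h : Fin.init b = Fin.init b'
    · have hlast : b (Fin.last n) ≠ b' (Fin.last n) := by
        intro heq
        apply hne
        funext i
        refine Fin.lastCases ?_ (fun j => ?_) i
        · exact heq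
        · exact congrFun h j
      rw [cellF, cellF, h]
      rcases Bool.eq_false_or_eq_true (b (Fin.last n)) with hb | hb <;>
        rcases Bool.eq_false_or_eq_true (b' (Fin.last n)) with hb' | hb' <;>
          simp only [hb, hb', Bool.false_eq_true, if_true, if_false] at hlast ⊢
      · exact absurd rfl hlast
      · exact disjoint_sdiff_right
      · exact disjoint_sdiff_left
      · exact absurd rfl hlast
    · exact Disjoint.mono (cellF_succ_subset hsub n b) (cellF_succ_subset hsub n b')
        (ih _ _ h)

lemma cellF_split (hsub : ∀ S, p S ⊆ S) (n : ℕ) (b : Fin n → Bool) :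
    cellF p n b = cellF p (n + 1) (Fin.snoc b true) ∪ cellF p (n + 1) (Fin.snoc b false) := by
  rw [cellF, cellF]
  simp only [Fin.snoc_last, Fin.init_snoc, if_true, if_false]
  exact (union_diff_cancel (hsub _)).symm

lemma cellF_cover (hsub : ∀ S, p S ⊆ S) :
    ∀ n : ℕ, (⋃ b : Fin n → Bool, cellF p n b) = univ := by
  intro n
  induction n with
  | zero => simp [cellF, iUnion_const]
  | succ n ih =>
    apply eq_univ_of_univ_subset
    rw [← ih]
    intro ω hω
    simp only [mem_iUnion] at hω ⊢
    obtain ⟨b, hb⟩ := hω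
    rw [cellF_split hsub n b] at hb
    rcases hb with hb | hb
    · exact ⟨Fin.snoc b true, hb⟩
    · exact ⟨Fin.snoc b false, hb⟩

/-- `X` is a union of level-`n` cells. -/
def cylF (p : Set Ω → Set Ω) (n : ℕ) (X : Set Ω) : Prop :=
  ∃ P : Finset (Fin n → Bool), X = ⋃ b ∈ P, cellF p n b

lemma cylF_succ (hsub : ∀ S, p S ⊆ S) {n : ℕ} {X : Set Ω} (h : cylF p n X) :
    cylF p (n + 1) X := by
  classical
  obtain ⟨P, rfl⟩ := h
  refine ⟨P.biUnion (fun b => {Fin.snoc b true, Fin.snoc b false}), ?_⟩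
  rw [Finset.set_biUnion_biUnion]
  refine iUnion₂_congr fun b _ => ?_
  rw [cellF_split hsub n b]
  rw [Finset.set_biUnion_insert, Finset.set_biUnion_singleton]

lemma cylF_mono (hsub : ∀ S, p S ⊆ S) {n n' : ℕ} (hle : n ≤ n') {X : Set Ω}
    (h : cylF p n X) : cylF p n' X := by
  induction hle with
  | refl => exact h
  | step _ ih => exact cylF_succ hsub ih

lemma cylF_univ (hsub : ∀ S, p S ⊆ S) (n : ℕ) : cylF p n (univ : Set Ω) := by
  refine ⟨Finset.univ, ?_⟩
  rw [← cellF_cover hsub n]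
  ext ω
  simp

/-- The `n`-th independent set: union, over all level-`n` cells, of the chosen piece. -/
def AnextF (p : Set Ω → Set Ω) (n : ℕ) : Set Ω :=
  ⋃ b ∈ (Finset.univ : Finset (Fin n → Bool)), cellF p (n + 1) (Fin.snoc b true)

lemma AnextF_meas [MeasurableSpace Ω] (hm : ∀ S, MeasurableSet S → MeasurableSet (p S))
    (n : ℕ) : MeasurableSet (AnextF p n) :=
  MeasurableSet.biUnion (Finset.univ : Finset (Fin n → Bool)).countable_toSet
    (fun b _ => cellF_meas hm (n + 1) (Fin.snoc b true))

lemma AnextF_cyl (n : ℕ) : cylF p (n + 1) (AnextF p n) := by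
  classical
  refine ⟨Finset.univ.image (fun b => Fin.snoc b true), ?_⟩
  rw [Finset.set_biUnion_finset_image]
  rfl

lemma snoc_true_inj {n : ℕ} {b b' : Fin n → Bool}
    (h : (Fin.snoc b true : Fin (n + 1) → Bool) = Fin.snoc b' true) :
    b = b' := by
  have := congrArg Fin.init h
  rwa [Fin.init_snoc, Fin.init_snoc] at this

lemma measure_AnextF_inter [MeasurableSpace Ω] (μ : Measure Ω)
    (hsub : ∀ S, p S ⊆ S) (hm : ∀ S, MeasurableSet S → MeasurableSet (p S))
    {q : ℝ≥0∞} (hq : ∀ S, MeasurableSet S → μ (p S) = q * μ S)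
    {n : ℕ} {X : Set Ω} (hX : cylF p n X) :
    μ (AnextF p n ∩ X) = q * μ X := by
  classical
  obtain ⟨P, rfl⟩ := hX
  have key : AnextF p n ∩ (⋃ b ∈ P, cellF p n b)
      = ⋃ b ∈ P, cellF p (n + 1) (Fin.snoc b true) := by
    ext ω
    constructor
    · rintro ⟨hA, hX⟩
      simp only [AnextF, mem_iUnion, Finset.mem_univ, exists_true_left] at hA
      simp only [mem_iUnion] at hX ⊢
      obtain ⟨b', hb'⟩ := hA
      obtain ⟨b, hbP, hb⟩ := hX
      have hbb : b' = b := by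
        by_contra hne
        have hd := cellF_disj hsub n b' b hne
        have h1 : ω ∈ cellF p n b' := by
          have := cellF_succ_subset hsub n (Fin.snoc b' true) hb'
          rwa [Fin.init_snoc] at this
        exact (hd.ne_of_mem h1 hb) rfl
      exact ⟨b, hbP, by rwa [hbb] at hb'⟩
    · intro hω
      simp only [mem_iUnion, exists_prop] at hω
      obtain ⟨b, hbP, hb⟩ := hω
      refine ⟨?_, ?_⟩
      · simp only [AnextF, mem_iUnion, Finset.mem_univ, exists_true_left]
        exact ⟨b, hb⟩
      · simp only [mem_iUnion, exists_prop]
        refine ⟨b, hbP, ?_⟩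
        have := cellF_succ_subset hsub n (Fin.snoc b true) hb
        rwa [Fin.init_snoc] at this
  rw [key]
  have hdisj : (↑P : Set (Fin n → Bool)).PairwiseDisjoint
      (fun b => cellF p (n + 1) (Fin.snoc b true)) := by
    intro b _ b' _ hne
    exact cellF_disj hsub (n + 1) _ _ (fun h => hne (snoc_true_inj h))
  have hdisj' : (↑P : Set (Fin n → Bool)).PairwiseDisjoint (fun b => cellF p n b) := by
    intro b _ b' _ hne
    exact cellF_disj hsub n _ _ hne
  rw [measure_biUnion_finset hdisj (fun b _ => cellF_meas hm _ _),
    measure_biUnion_finset hdisj' (fun b _ => cellF_meas hm _ _), Finset.mul_sum]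
  refine Finset.sum_congr rfl fun b _ => ?_
  have : cellF p (n + 1) (Fin.snoc b true) = p (cellF p n b) := by
    rw [cellF]
    simp [Fin.snoc_last, Fin.init_snoc]
  rw [this, hq _ (cellF_meas hm _ _)]

end Cells

variable {Ω : Type*} [MeasurableSpace Ω] {μ : Measure Ω} [IsFiniteMeasure μ]

/-- From no atoms: arbitrarily small positive-measure subsets. -/
lemma exists_small_subset
    (hNA : ∀ A : Set Ω, MeasurableSet A → 0 < μ A →
      ∃ B : Set Ω, MeasurableSet B ∧ B ⊆ A ∧ μ B ≠ 0 ∧ μ B ≠ μ A)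
    (S : Set Ω) (hS : MeasurableSet S) (h0 : 0 < μ S) {ε : ℝ≥0∞} (hε : ε ≠ 0) :
    ∃ B, B ⊆ S ∧ MeasurableSet B ∧ 0 < μ B ∧ μ B ≤ ε := by
  have key : ∀ k : ℕ, ∃ B, B ⊆ S ∧ MeasurableSet B ∧ 0 < μ B ∧ μ B ≤ μ S * 2⁻¹ ^ k := by
    intro k
    induction k with
    | zero => exact ⟨S, subset_rfl, hS, h0, by simp⟩
    | succ k ih =>
      obtain ⟨B, hBS, hBm, hB0, hBle⟩ := ih
      obtain ⟨C, hCm, hCB, hC0, hCne⟩ := hNA B hBm hB0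
      have hCfin : μ C ≠ ∞ := (measure_lt_top μ C).ne
      have hCltB : μ C < μ B := lt_of_le_of_ne (measure_mono hCB) hCne
      have hdiff : μ (B \ C) = μ B - μ C := measure_diff hCB hCm.nullMeasurableSet hCfin
      by_cases hc : μ C ≤ μ B / 2
      · exact ⟨C, hCB.trans hBS, hCm, pos_iff_ne_zero.mpr hC0,
          le_trans (hc.trans (by
            rw [ENNReal.div_eq_inv_mul, pow_succ]
            calc 2⁻¹ * μ B ≤ 2⁻¹ * (μ S * 2⁻¹ ^ k) := by
                  exact mul_le_mul_right hBle _
              _ = μ S * (2⁻¹ ^ k * 2⁻¹) := by ring)) le_rfl⟩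
      · push_neg at hc
        refine ⟨B \ C, (diff_subset).trans hBS, hBm.diff hCm, ?_, ?_⟩
        · rw [hdiff]
          exact tsub_pos_iff_lt.mpr hCltB
        · rw [hdiff]
          have h1 : μ B - μ C ≤ μ B / 2 := by
            rw [tsub_le_iff_right]
            calc μ B = μ B / 2 + μ B / 2 := (ENNReal.add_halves _).symm
              _ ≤ μ B / 2 + μ C := by exact add_le_add_right hc.le _
          refine h1.trans ?_
          rw [ENNReal.div_eq_inv_mul, pow_succ]
          calc 2⁻¹ * μ B ≤ 2⁻¹ * (μ S * 2⁻¹ ^ k) := mul_le_mul_right hBle _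
            _ = μ S * (2⁻¹ ^ k * 2⁻¹) := by ring
  have hSfin : μ S ≠ ∞ := (measure_lt_top μ S).ne
  have hεS : ε / μ S ≠ 0 := by
    simp only [ne_eq, ENNReal.div_eq_zero_iff, hε, hSfin, or_self, not_false_eq_true]
  obtain ⟨k, hk⟩ := ENNReal.exists_inv_two_pow_lt hεS
  obtain ⟨B, h1, h2, h3, h4⟩ := key k
  refine ⟨B, h1, h2, h3, h4.trans ?_⟩
  calc μ S * 2⁻¹ ^ k ≤ μ S * (ε / μ S) := mul_le_mul_right hk.le _
    _ ≤ ε := ENNReal.mul_div_le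

/-- Sierpiński: a subset of any prescribed measure `s ≤ μ S` exists. -/
lemma exists_subset_measure_eq'
    (hNA : ∀ A : Set Ω, MeasurableSet A → 0 < μ A →
      ∃ B : Set Ω, MeasurableSet B ∧ B ⊆ A ∧ μ B ≠ 0 ∧ μ B ≠ μ A)
    (S : Set Ω) (hS : MeasurableSet S) {s : ℝ≥0∞} (hs : s ≤ μ S) :
    ∃ B, B ⊆ S ∧ MeasurableSet B ∧ μ B = s := by
  classical
  have hsfin : s ≠ ∞ := (hs.trans_lt (measure_lt_top μ S)).ne
  set Good : Set Ω → Prop := fun C => C ⊆ S ∧ MeasurableSet C ∧ μ C ≤ s with hGooddef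
  set Adm : Set Ω → Set Ω → Prop :=
    fun C B => B ⊆ S \ C ∧ MeasurableSet B ∧ μ C + μ B ≤ s with hAdmdef
  set sig : Set Ω → ℝ≥0∞ := fun C => ⨆ (B : Set Ω) (_ : Adm C B), μ B with hsigdef
  have hsig_le : ∀ C, sig C ≤ s := by
    intro C
    refine iSup₂_le fun B hB => ?_
    exact le_trans le_add_self hB.2.2
  have step : ∀ C, Good C → ∃ B, Adm C B ∧ sig C / 2 ≤ μ B := by
    intro C hC
    by_cases h : sig C = 0
    · refine ⟨∅, ⟨empty_subset _, MeasurableSet.empty, by simpa using hC.2.2⟩, by simp [h]⟩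
    · have hlt : sig C / 2 < sig C :=
        ENNReal.half_lt_self h ((hsig_le C).trans_lt hsfin.lt_top).ne
      rw [hsigdef] at hlt
      simp only [lt_iSup_iff] at hlt
      obtain ⟨B, hB, hlt⟩ := hlt
      exact ⟨B, hB, hlt.le⟩
  set F : Set Ω → Set Ω := fun C => if h : Good C then C ∪ (step C h).choose else C with hFdef
  have hF : ∀ C, Good C → Good (F C) ∧ C ⊆ F C ∧
      ∀ D, Adm C D → μ C + μ D / 2 ≤ μ (F C) := by
    intro C hC
    have hch := (step C hC).choose_spec
    set B := (step C hC).choose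
    have hFC : F C = C ∪ B := dif_pos hC
    have hdisj : Disjoint C B :=
      Set.disjoint_of_subset_right hch.1.1 disjoint_sdiff_right
    have hmeasu : μ (F C) = μ C + μ B := by
      rw [hFC, measure_union hdisj hch.1.2.1]
    refine ⟨⟨?_, ?_, ?_⟩, ?_, ?_⟩
    · rw [hFC]; exact union_subset hC.1 (hch.1.1.trans diff_subset)
    · rw [hFC]; exact hC.2.1.union hch.1.2.1
    · rw [hmeasu]; exact hch.1.2.2
    · rw [hFC]; exact subset_union_left
    · intro D hD
      rw [hmeasu]
      refine add_le_add_right (le_trans ?_ hch.2) _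
      refine ENNReal.div_le_div_right ?_ 2
      rw [hsigdef]
      exact le_iSup₂ (f := fun B _ => μ B) D hD
  set c : ℕ → Set Ω := fun n => F^[n] ∅ with hcdef
  have hc0 : Good (c 0) := ⟨by simp [hcdef], MeasurableSet.empty, by simp [hcdef]⟩
  have hcsucc : ∀ n, c (n + 1) = F (c n) := by
    intro n; exact Function.iterate_succ_apply' F n ∅
  have hcGood : ∀ n, Good (c n) := by
    intro n; induction n with
    | zero => exact hc0
    | succ n ih => rw [hcsucc]; exact (hF _ ih).1
  have hcmono : Monotone c :=
    monotone_nat_of_le_succ (fun n => by rw [hcsucc]; exact (hF _ (hcGood n)).2.1)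
  set L : Set Ω := ⋃ n, c n with hLdef
  have hLS : L ⊆ S := iUnion_subset fun n => (hcGood n).1
  have hLmeas : MeasurableSet L := MeasurableSet.iUnion fun n => (hcGood n).2.1
  have hLmeasure : μ L = ⨆ n, μ (c n) :=
    hcmono.measure_iUnion
  have hLle : μ L ≤ s := by
    rw [hLmeasure]; exact iSup_le fun n => (hcGood n).2.2
  refine ⟨L, hLS, hLmeas, ?_⟩
  by_contra hne
  have hLlt : μ L < s := lt_of_le_of_ne hLle hne
  have hSL : 0 < μ (S \ L) := by
    have : μ (S \ L) = μ S - μ L := measure_diff hLS hLmeas.nullMeasurableSet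
      (measure_lt_top μ L).ne
    rw [this]
    exact lt_of_lt_of_le (tsub_pos_iff_lt.mpr hLlt) (tsub_le_tsub_right hs _)
  have hgap : s - μ L ≠ 0 := (tsub_pos_iff_lt.mpr hLlt).ne'
  obtain ⟨D, hDS, hDm, hD0, hDle⟩ :=
    exists_small_subset hNA (S \ L) (hS.diff hLmeas) hSL hgap
  have hAdmD : ∀ n, Adm (c n) D := by
    intro n
    refine ⟨hDS.trans (diff_subset_diff_right (subset_iUnion c n)), hDm, ?_⟩
    calc μ (c n) + μ D ≤ μ L + (s - μ L) := by
          exact add_le_add (measure_mono (subset_iUnion c n)) hDle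
      _ = s := add_tsub_cancel_of_le hLlt.le
  have hgain : ∀ n : ℕ, (n : ℝ≥0∞) * (μ D / 2) ≤ μ (c n) := by
    intro n
    induction n with
    | zero => simp
    | succ n ih =>
      rw [hcsucc]
      calc ((n + 1 : ℕ) : ℝ≥0∞) * (μ D / 2) = (n : ℝ≥0∞) * (μ D / 2) + μ D / 2 := by
            push_cast; ring
        _ ≤ μ (c n) + μ D / 2 := add_le_add_left ih _
        _ ≤ μ (F (c n)) := (hF _ (hcGood n)).2.2 D (hAdmD n)
  have ha0 : μ D / 2 ≠ 0 := by
    simp only [ne_eq, ENNReal.div_eq_zero_iff, hD0.ne', false_or]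
    exact ENNReal.ofNat_ne_top
  have hatop : μ D / 2 ≠ ∞ := by
    refine (ENNReal.div_lt_top (measure_lt_top μ D).ne (by norm_num)).ne
  obtain ⟨n, hn⟩ := ENNReal.exists_nat_gt (ENNReal.div_lt_top hsfin ha0).ne
  have : s < (n : ℝ≥0∞) * (μ D / 2) := by
    rw [← ENNReal.div_lt_iff (Or.inl ha0) (Or.inl hatop)]
    exact hn
  exact absurd ((hgain n).trans ((hcGood n).2.2)) (not_le.mpr this)

/-- An "independent" family of sets each of measure `2⁻¹ ^ m` times the total mass. -/
lemma exists_indep_family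
    (hNA : ∀ A : Set Ω, MeasurableSet A → 0 < μ A →
      ∃ B : Set Ω, MeasurableSet B ∧ B ⊆ A ∧ μ B ≠ 0 ∧ μ B ≠ μ A) (m : ℕ) :
    ∃ A : ℕ → Set Ω, (∀ i, MeasurableSet (A i)) ∧
      (∀ i, μ (A i) = 2⁻¹ ^ m * μ univ) ∧
      (∀ i j, i ≠ j → μ (A i ∩ A j) = 2⁻¹ ^ m * (2⁻¹ ^ m * μ univ)) := by
  classical
  have hhalf : ∀ S : Set Ω, MeasurableSet S →
      ∃ B, B ⊆ S ∧ MeasurableSet B ∧ μ B = 2⁻¹ * μ S := by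
    intro S hS
    have h2 : μ S / 2 ≤ μ S := ENNReal.half_le_self
    obtain ⟨B, h1, h2', h3⟩ := exists_subset_measure_eq' hNA S hS h2
    exact ⟨B, h1, h2', by rw [h3, ENNReal.div_eq_inv_mul]⟩
  set half : Set Ω → Set Ω := fun S =>
    if h : MeasurableSet S then (hhalf S h).choose else ∅ with hhalfdef
  have half_spec : ∀ S : Set Ω, MeasurableSet S →
      half S ⊆ S ∧ MeasurableSet (half S) ∧ μ (half S) = 2⁻¹ * μ S := by
    intro S hS
    have : half S = (hhalf S hS).choose := dif_pos hS
    rw [this]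
    exact (hhalf S hS).choose_spec
  have half_sub : ∀ S : Set Ω, half S ⊆ S := by
    intro S
    by_cases h : MeasurableSet S
    · exact (half_spec S h).1
    · have : half S = ∅ := dif_neg h
      rw [this]; exact empty_subset _
  have piece_sub' : ∀ (k : ℕ) (S : Set Ω), half^[k] S ⊆ S := by
    intro k
    induction k with
    | zero => intro S; simp
    | succ k ih =>
      intro S
      rw [Function.iterate_succ_apply']
      exact (half_sub _).trans (ih S)
  have piece_spec' : ∀ (k : ℕ) (S : Set Ω), MeasurableSet S →
      MeasurableSet (half^[k] S) ∧ μ (half^[k] S) = 2⁻¹ ^ k * μ S := by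
    intro k
    induction k with
    | zero => intro S hS; simpa using hS
    | succ k ih =>
      intro S hS
      rw [Function.iterate_succ_apply']
      obtain ⟨ih1, ih2⟩ := ih S hS
      refine ⟨(half_spec _ ih1).2.1, ?_⟩
      rw [(half_spec _ ih1).2.2, ih2, pow_succ]
      ring
  set piece : Set Ω → Set Ω := fun S => half^[m] S with hpiecedef
  have piece_sub : ∀ S : Set Ω, piece S ⊆ S := fun S => piece_sub' m S
  have piece_meas : ∀ S : Set Ω, MeasurableSet S → MeasurableSet (piece S) :=
    fun S hS => (piece_spec' m S hS).1
  have piece_measure : ∀ S : Set Ω, MeasurableSet S → μ (piece S) = 2⁻¹ ^ m * μ S :=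
    fun S hS => (piece_spec' m S hS).2
  refine ⟨fun i => AnextF piece i, fun i => AnextF_meas piece_meas i, fun i => ?_, ?_⟩
  · have := measure_AnextF_inter μ piece_sub piece_meas piece_measure (cylF_univ piece_sub i)
    rwa [inter_univ] at this
  · have key : ∀ i j : ℕ, i < j →
        μ (AnextF piece i ∩ AnextF piece j) = 2⁻¹ ^ m * (2⁻¹ ^ m * μ univ) := by
      intro i j hij
      have hcyl : cylF piece j (AnextF piece i) :=
        cylF_mono piece_sub hij (AnextF_cyl i)
      rw [inter_comm]
      rw [measure_AnextF_inter μ piece_sub piece_meas piece_measure hcyl]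
      congr 1
      have := measure_AnextF_inter μ piece_sub piece_meas piece_measure (cylF_univ piece_sub i)
      rwa [inter_univ] at this
    intro i j hij
    rcases lt_or_gt_of_ne hij with h | h
    · exact key i j h
    · rw [inter_comm]; exact key j i h

lemma inner_indicator_indicator {s u : Set Ω} (hs : MeasurableSet s) (hu : MeasurableSet u) :
    ⟪indicatorConstLp 2 hs (measure_ne_top μ s) (1 : ℝ),
      indicatorConstLp 2 hu (measure_ne_top μ u) (1 : ℝ)⟫ = (μ (s ∩ u)).toReal := by
  rw [MeasureTheory.L2.inner_indicatorConstLp_one hs (measure_ne_top μ s)]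
  have hcoe : (indicatorConstLp 2 hu (measure_ne_top μ u) (1 : ℝ) : Ω → ℝ)
      =ᵐ[μ] u.indicator (fun _ => (1 : ℝ)) := indicatorConstLp_coeFn
  calc (∫ x in s, (indicatorConstLp 2 hu (measure_ne_top μ u) (1 : ℝ) : Ω → ℝ) x ∂μ)
      = ∫ x in s, u.indicator (fun _ => (1 : ℝ)) x ∂μ :=
        integral_congr_ae (ae_restrict_of_ae hcoe)
    _ = ∫ x in s ∩ u, (1 : ℝ) ∂μ := setIntegral_indicator hu
    _ = (μ (s ∩ u)).toReal := by
        rw [setIntegral_const]; simp; rfl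

lemma tendsto_measure_inter_of_indep {P : ℝ} (hp0 : 0 < P) (hp1 : P < 1)
    (hT : 0 < (μ univ).toReal)
    {A : ℕ → Set Ω} (hA : ∀ i, MeasurableSet (A i))
    (hAμ : ∀ i, (μ (A i)).toReal = P * (μ univ).toReal)
    (hAb : ∀ i j, i ≠ j → (μ (A i ∩ A j)).toReal = P * (P * (μ univ).toReal))
    {E : Set Ω} (hE : MeasurableSet E) :
    Tendsto (fun i => (μ (A i ∩ E)).toReal) atTop (𝓝 (P * (μ E).toReal)) := by
  classical
  set T : ℝ := (μ univ).toReal with hTdef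
  set eA : ℕ → Lp ℝ 2 μ := fun i => indicatorConstLp 2 (hA i) (measure_ne_top μ _) (1 : ℝ)
    with heAdef
  set one : Lp ℝ 2 μ := indicatorConstLp 2 MeasurableSet.univ (measure_ne_top μ _) (1 : ℝ)
    with honedef
  set K : Lp ℝ 2 μ := indicatorConstLp 2 hE (measure_ne_top μ _) (1 : ℝ) with hKdef
  set f : ℕ → Lp ℝ 2 μ := fun i => eA i - P • one with hfdef
  have hIee : ∀ i j, ⟪eA i, eA j⟫ = (μ (A i ∩ A j)).toReal := fun i j =>
    inner_indicator_indicator (hA i) (hA j)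
  have hIeo : ∀ i, ⟪eA i, one⟫ = (μ (A i)).toReal := fun i => by
    rw [heAdef, honedef, inner_indicator_indicator (hA i) MeasurableSet.univ, inter_univ]
  have hIoe : ∀ i, ⟪one, eA i⟫ = (μ (A i)).toReal := fun i => by
    rw [heAdef, honedef, inner_indicator_indicator MeasurableSet.univ (hA i), univ_inter]
  have hIoo : ⟪one, one⟫ = T := by
    rw [honedef, inner_indicator_indicator MeasurableSet.univ MeasurableSet.univ, univ_inter]
  have hIeK : ∀ i, ⟪eA i, K⟫ = (μ (A i ∩ E)).toReal := fun i =>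
    inner_indicator_indicator (hA i) hE
  have hIoK : ⟪one, K⟫ = (μ E).toReal := by
    rw [honedef, hKdef, inner_indicator_indicator MeasurableSet.univ hE, univ_inter]
  have hff : ∀ i j, ⟪f i, f j⟫
      = (μ (A i ∩ A j)).toReal - P * (μ (A j)).toReal - P * (μ (A i)).toReal + P * (P * T) := by
    intro i j
    rw [hfdef]
    simp only [inner_sub_left, inner_sub_right, real_inner_smul_left, real_inner_smul_right,
      hIee, hIeo, hIoe, hIoo]
    ring
  set V : ℝ := P * T * (1 - P) with hVdef
  have hV : 0 < V := by
    apply mul_pos (mul_pos hp0 hT)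
    linarith
  have hfij : ∀ i j, i ≠ j → ⟪f i, f j⟫ = 0 := by
    intro i j hij
    rw [hff i j, hAb i j hij, hAμ i, hAμ j]
    ring
  have hfii : ∀ i, ⟪f i, f i⟫ = V := by
    intro i
    rw [hff i i, inter_self, hAμ i, hVdef]
    ring
  set v : ℕ → Lp ℝ 2 μ := fun i => (Real.sqrt V)⁻¹ • f i with hvdef
  have hsq : Real.sqrt V * Real.sqrt V = V := Real.mul_self_sqrt hV.le
  have hsqne : Real.sqrt V ≠ 0 := by
    intro h
    rw [h, mul_zero] at hsq
    exact hV.ne' hsq.symm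
  have horth : Orthonormal ℝ v := by
    rw [orthonormal_iff_ite]
    intro i j
    rw [hvdef]
    simp only [real_inner_smul_left, real_inner_smul_right]
    by_cases hij : i = j
    · subst hij
      rw [hfii i, if_pos rfl, ← mul_assoc, ← mul_inv, hsq]
      exact inv_mul_cancel₀ hV.ne'
    · rw [hfij i j hij, if_neg hij]
      ring
  have hfK : ∀ i, ⟪f i, K⟫ = (μ (A i ∩ E)).toReal - P * (μ E).toReal := by
    intro i
    rw [hfdef]
    simp only [inner_sub_left, real_inner_smul_left, hIeK, hIoK]
  set d : ℕ → ℝ := fun i => (μ (A i ∩ E)).toReal - P * (μ E).toReal with hddef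
  have hvK : ∀ i, ⟪v i, K⟫ = (Real.sqrt V)⁻¹ * d i := by
    intro i
    rw [hvdef]
    simp only [real_inner_smul_left]
    rw [hfK]
  have hsummable : Summable fun i => ‖⟪v i, K⟫‖ ^ 2 := horth.inner_products_summable (x := K)
  have htend0 : Tendsto (fun i => ‖⟪v i, K⟫‖ ^ 2) atTop (𝓝 0) := hsummable.tendsto_atTop_zero
  have htd2 : Tendsto (fun i => d i ^ 2) atTop (𝓝 0) := by
    have : (fun i => d i ^ 2) = fun i => V * ‖⟪v i, K⟫‖ ^ 2 := by
      funext i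
      rw [hvK i, norm_mul, mul_pow, norm_inv, Real.norm_eq_abs (Real.sqrt V),
        abs_of_nonneg (Real.sqrt_nonneg V), inv_pow, Real.sq_sqrt hV.le,
        Real.norm_eq_abs, sq_abs, ← mul_assoc, mul_inv_cancel₀ hV.ne', one_mul]
    rw [this]
    simpa using htend0.const_mul V
  have htd : Tendsto d atTop (𝓝 0) := by
    have habs : Tendsto (fun i => |d i|) atTop (𝓝 0) := by
      have := (Real.continuous_sqrt.tendsto 0).comp htd2
      simpa [Real.sqrt_sq_eq_abs, Function.comp_def] using this
    exact (tendsto_zero_iff_abs_tendsto_zero d).mpr habs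
  have hfinal : Tendsto (fun i => d i + P * (μ E).toReal) atTop
      (𝓝 (0 + P * (μ E).toReal)) := htd.add_const _
  rw [zero_add] at hfinal
  refine hfinal.congr fun i => ?_
  rw [hddef]; ring

theorem not_localizing_Linfty_of_no_atoms_aux
    (hNoAtoms : ∀ A : Set Ω, MeasurableSet A → 0 < μ A →
      ∃ B : Set Ω, MeasurableSet B ∧ B ⊆ A ∧ μ B ≠ 0 ∧ μ B ≠ μ A) :
    ¬ IsLocalizing {X : Lp ℂ 2 μ →L[ℂ] Lp ℂ 2 μ |
        ∃ φ : Ω → ℂ, Measurable φ ∧ (∃ C : ℝ, ∀ ω, ‖φ ω‖ ≤ C) ∧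
          ∀ f : Lp ℂ 2 μ, ⇑(X f) =ᵐ[μ] fun ω => φ ω * f ω} := by
  rintro ⟨c, r, hr0, h0B, hloc⟩
  classical
  have hrc : r < ‖c‖ := by
    by_contra h
    push_neg at h
    exact h0B (by simpa [Metric.mem_closedBall, dist_zero_left] using h)
  -- choose δ for uniform smallness of indicators of c
  have hc2 : MemLp (⇑c) 2 μ := Lp.memLp c
  obtain ⟨δ, hδ0, hδ⟩ := hc2.eLpNorm_indicator_le (by norm_num : (1:ℝ≥0∞) ≤ 2)
    ENNReal.ofNat_ne_top hr0
  -- choose m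
  have hden : (ENNReal.ofReal δ) / μ univ ≠ 0 := by
    simp only [ne_eq, ENNReal.div_eq_zero_iff, not_or]
    exact ⟨by simpa using hδ0.le.lt_of_ne' (by simpa [ENNReal.ofReal_eq_zero] using hδ0.ne'),
      measure_ne_top μ univ⟩
  obtain ⟨k₀, hk₀⟩ := ENNReal.exists_inv_two_pow_lt hden
  set m : ℕ := k₀ + 1 with hmdef
  set q : ℝ≥0∞ := 2⁻¹ ^ m with hqdef
  have hqδ : q * μ univ ≤ ENNReal.ofReal δ := by
    have h1 : q ≤ 2⁻¹ ^ k₀ := by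
      rw [hqdef, hmdef, pow_succ]
      exact mul_le_of_le_one_right' (by simp [ENNReal.inv_le_one])
    calc q * μ univ ≤ (ENNReal.ofReal δ / μ univ) * μ univ :=
          mul_le_mul_left (h1.trans hk₀.le) _
      _ = μ univ * (ENNReal.ofReal δ / μ univ) := mul_comm _ _
      _ ≤ ENNReal.ofReal δ := ENNReal.mul_div_le
  set P : ℝ := q.toReal with hPdef
  have hPval : P = (2⁻¹ : ℝ) ^ m := by
    rw [hPdef, hqdef, ENNReal.toReal_pow, ENNReal.toReal_inv]
    norm_num
  have hP0 : 0 < P := by rw [hPval]; positivity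
  have hP1 : P < 1 := by
    rw [hPval, hmdef]
    calc (2⁻¹ : ℝ) ^ (k₀ + 1) ≤ (2⁻¹ : ℝ) ^ 1 :=
          pow_le_pow_of_le_one (by norm_num) (by norm_num) (by omega)
      _ < 1 := by norm_num
  -- the independent family
  obtain ⟨A, hAmeas, hAμ, hApair⟩ := exists_indep_family hNoAtoms m
  have hAμ' : ∀ i, (μ (A i)).toReal = P * (μ univ).toReal := by
    intro i; rw [hAμ i, ENNReal.toReal_mul, hPdef, hqdef]
  have hApair' : ∀ i j, i ≠ j → (μ (A i ∩ A j)).toReal = P * (P * (μ univ).toReal) := by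
    intro i j hij; rw [hApair i j hij, ENNReal.toReal_mul, ENNReal.toReal_mul, hPdef, hqdef]
  -- the test sequence
  set x : ℕ → Lp ℂ 2 μ := fun i => (hc2.indicator (hAmeas i).compl).toLp ((A i)ᶜ.indicator ⇑c)
    with hxdef
  have hxcoe : ∀ i, ⇑(x i) =ᵐ[μ] (A i)ᶜ.indicator ⇑c := fun i => MemLp.coeFn_toLp _
  have hxmem : ∀ i, x i ∈ Metric.closedBall c r := by
    intro i
    rw [Metric.mem_closedBall, dist_eq_norm, Lp.norm_def]
    have h1 : ⇑(x i - c) =ᵐ[μ] fun ω => -((A i).indicator (⇑c) ω) := by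
      refine (Lp.coeFn_sub (x i) c).trans ?_
      refine ((hxcoe i).sub (EventuallyEq.refl _ (⇑c))).trans ?_
      refine Eventually.of_forall fun ω => ?_
      by_cases hω : ω ∈ A i
      · simp [Set.indicator_apply, mem_compl_iff, hω]
      · simp [Set.indicator_apply, mem_compl_iff, hω]
    rw [eLpNorm_congr_ae h1]
    have h2 : eLpNorm (fun ω => -((A i).indicator (⇑c) ω)) 2 μ
        = eLpNorm ((A i).indicator (⇑c)) 2 μ := by
      exact eLpNorm_neg _ _ _
    rw [h2]
    have h3 : μ (A i) ≤ ENNReal.ofReal δ := by rw [hAμ i]; exact hqδ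
    have h4 := hδ (A i) (hAmeas i) h3
    calc (eLpNorm ((A i).indicator (⇑c)) 2 μ).toReal ≤ (ENNReal.ofReal r).toReal :=
          ENNReal.toReal_mono ENNReal.ofReal_ne_top h4
      _ = r := ENNReal.toReal_ofReal hr0.le
  obtain ⟨n, X, y, hnmono, hXmem, _, hy0, htendsto⟩ := hloc x hxmem
  -- a set where ‖y‖ is bounded below
  set g : Ω → ℂ := (Lp.aestronglyMeasurable y).mk ⇑y with hgdef
  have hgm : StronglyMeasurable g := (Lp.aestronglyMeasurable y).stronglyMeasurable_mk
  have hyg : ⇑y =ᵐ[μ] g := (Lp.aestronglyMeasurable y).ae_eq_mk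
  set Ek : ℕ → Set Ω := fun k => {ω | ((k : ℝ) + 1)⁻¹ ≤ ‖g ω‖} with hEkdef
  have hEkmeas : ∀ k, MeasurableSet (Ek k) := by
    intro k
    exact (hgm.norm.measurable) measurableSet_Ici
  have hex : ∃ k : ℕ, 0 < μ (Ek k) := by
    by_contra hcon
    push_neg at hcon
    have hall : ∀ᵐ ω ∂μ, ∀ k : ℕ, ω ∉ Ek k := by
      rw [ae_all_iff]
      intro k
      exact measure_eq_zero_iff_ae_notMem.mp (le_antisymm (hcon k) zero_le)
    have hg0 : ∀ᵐ ω ∂μ, g ω = 0 := by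
      refine hall.mono fun ω hω => ?_
      by_contra hne
      have hpos : 0 < ‖g ω‖ := norm_pos_iff.mpr hne
      obtain ⟨k, hk⟩ := exists_nat_one_div_lt hpos
      exact hω k (by rw [hEkdef]; simp only [mem_setOf_eq]
                     rw [← one_div]; exact hk.le)
    exact hy0 (Lp.eq_zero_iff_ae_eq_zero.mpr (hyg.trans hg0))
  obtain ⟨k, hEpos⟩ := hex
  set t : ℝ := ((k : ℝ) + 1)⁻¹ with htdef
  have ht0 : 0 < t := by rw [htdef]; positivity
  set E : Set Ω := Ek k with hEdef
  have hE : MeasurableSet E := hEkmeas k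
  have htE : ∀ᵐ ω ∂μ, ω ∈ E → t ≤ ‖(⇑y) ω‖ := by
    refine hyg.mono fun ω hω hωE => ?_
    rw [hω]
    exact hωE
  have hμuniv : μ univ ≠ 0 := by
    intro h
    have h2 : μ E ≤ μ univ := measure_mono (subset_univ E)
    rw [h, le_zero_iff] at h2
    exact hEpos.ne' h2
  have hT : 0 < (μ univ).toReal := ENNReal.toReal_pos hμuniv (measure_ne_top μ univ)
  -- Bessel: eventual lower bound for μ (A i ∩ E)
  set β : ℝ := P * (μ E).toReal / 2 with hβdef
  have hβ0 : 0 < β := by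
    rw [hβdef]
    have := ENNReal.toReal_pos hEpos.ne' (measure_ne_top μ E)
    positivity
  have htendμ := tendsto_measure_inter_of_indep hP0 hP1 hT hAmeas hAμ' hApair' hE
  have hev : ∀ᶠ i in atTop, β < (μ (A i ∩ E)).toReal := by
    refine htendμ.eventually (eventually_gt_nhds ?_)
    rw [hβdef]
    have := ENNReal.toReal_pos hEpos.ne' (measure_ne_top μ E)
    have hPμ : 0 < P * (μ E).toReal := by positivity
    linarith
  obtain ⟨i₀, hi₀⟩ := eventually_atTop.mp hev
  -- pick a large index
  set ε₁ : ℝ := t * Real.sqrt β with hε₁def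
  have hε₁0 : 0 < ε₁ := mul_pos ht0 (Real.sqrt_pos.mpr hβ0)
  obtain ⟨N, hN⟩ := Metric.tendsto_atTop.mp htendsto ε₁ hε₁0
  set j : ℕ := max N i₀ with hjdef
  set w : Lp ℂ 2 μ := X j (x (n j)) with hwdef
  have hwy : ‖y - w‖ < ε₁ := by
    have := hN j (le_max_left _ _)
    rwa [dist_eq_norm, ← norm_neg, neg_sub] at this
  have hnj : i₀ ≤ n j := le_trans (le_max_right _ _) hnmono.le_apply
  obtain ⟨φ, hφm, _, hφmul⟩ := hXmem j
  have hw0 : ∀ᵐ ω ∂μ, ω ∈ A (n j) → (⇑w) ω = 0 := by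
    refine ((hφmul (x (n j))).and (hxcoe (n j))).mono fun ω hh hω => ?_
    obtain ⟨h1, h2⟩ := hh
    have h3 : (A (n j))ᶜ.indicator (⇑c) ω = 0 :=
      Set.indicator_of_notMem (by simp [hω]) _
    simp [hwdef, h1, h2, h3]
  have hmono1 : eLpNorm ((A (n j)).indicator (⇑y)) 2 μ ≤ eLpNorm (⇑y - ⇑w) 2 μ := by
    refine eLpNorm_mono_ae (hw0.mono fun ω hω => ?_)
    by_cases h : ω ∈ A (n j)
    · rw [Set.indicator_of_mem h, Pi.sub_apply, hω h, sub_zero]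
    · rw [Set.indicator_of_notMem h, norm_zero]
      exact norm_nonneg _
  have heq1 : eLpNorm (⇑y - ⇑w) 2 μ = ENNReal.ofReal ‖y - w‖ := by
    have h0 : eLpNorm (⇑(y - w)) 2 μ = eLpNorm (⇑y - ⇑w) 2 μ :=
      eLpNorm_congr_ae (Lp.coeFn_sub y w)
    rw [Lp.norm_def, ← h0, ENNReal.ofReal_toReal (Lp.eLpNorm_ne_top (y - w))]
  have hmono2 : ENNReal.ofReal ε₁ ≤ eLpNorm ((A (n j)).indicator (⇑y)) 2 μ := by
    have hub : eLpNorm ((A (n j) ∩ E).indicator (fun _ => (t : ℂ))) 2 μ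
        ≤ eLpNorm ((A (n j)).indicator (⇑y)) 2 μ := by
      refine eLpNorm_mono_ae (htE.mono fun ω hω => ?_)
      by_cases h : ω ∈ A (n j) ∩ E
      · rw [Set.indicator_of_mem h, Set.indicator_of_mem h.1]
        rw [Complex.norm_real, Real.norm_eq_abs, abs_of_pos ht0]
        exact hω h.2
      · rw [Set.indicator_of_notMem h, norm_zero]
        exact norm_nonneg _
    refine le_trans ?_ hub
    rw [eLpNorm_indicator_const ((hAmeas (n j)).inter hE) (by norm_num) ENNReal.ofNat_ne_top]
    have hc1 : ((‖(t : ℂ)‖₊ : ℝ≥0∞)) = ENNReal.ofReal t := by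
      rw [← enorm_eq_nnnorm, ← ofReal_norm, Complex.norm_real, Real.norm_eq_abs, abs_of_pos ht0]
    have hc2' : ENNReal.ofReal β ≤ μ (A (n j) ∩ E) :=
      ENNReal.ofReal_le_of_le_toReal (hi₀ (n j) hnj).le
    calc ENNReal.ofReal ε₁ = ENNReal.ofReal t * ENNReal.ofReal (Real.sqrt β) := by
          rw [hε₁def, ENNReal.ofReal_mul ht0.le]
      _ = ENNReal.ofReal t * (ENNReal.ofReal β) ^ (1 / (2:ℝ≥0∞).toReal) := by
          congr 1
          rw [ENNReal.toReal_ofNat]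
          rw [ENNReal.ofReal_rpow_of_pos hβ0]
          congr 1
          exact Real.sqrt_eq_rpow β
      _ ≤ (‖(t : ℂ)‖₊ : ℝ≥0∞) * μ (A (n j) ∩ E) ^ (1 / (2:ℝ≥0∞).toReal) := by
          rw [hc1]
          exact mul_le_mul_right (ENNReal.rpow_le_rpow hc2' (by norm_num)) _
  have : ENNReal.ofReal ε₁ ≤ ENNReal.ofReal ‖y - w‖ := by
    calc ENNReal.ofReal ε₁ ≤ eLpNorm ((A (n j)).indicator (⇑y)) 2 μ := hmono2
      _ ≤ eLpNorm (⇑y - ⇑w) 2 μ := hmono1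
      _ = ENNReal.ofReal ‖y - w‖ := heq1
  have hfin : ε₁ ≤ ‖y - w‖ := by
    rwa [ENNReal.ofReal_le_ofReal_iff (norm_nonneg _)] at this
  linarith

end Auxiliary

/-- If a finite measure `μ` has no atoms, then the algebra of all multiplication operators
by bounded measurable functions on `L²(μ)` is not localizing. -/
theorem not_localizing_Linfty_of_no_atoms
    {Ω : Type*} [MeasurableSpace Ω] (μ : Measure Ω) [IsFiniteMeasure μ]
    (hNoAtoms : ∀ A : Set Ω, MeasurableSet A → 0 < μ A →
      ∃ B : Set Ω, MeasurableSet B ∧ B ⊆ A ∧ μ B ≠ 0 ∧ μ B ≠ μ A) :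
    ¬ IsLocalizing {X : Lp ℂ 2 μ →L[ℂ] Lp ℂ 2 μ |
        ∃ φ : Ω → ℂ, Measurable φ ∧ (∃ C : ℝ, ∀ ω, ‖φ ω‖ ≤ C) ∧
          ∀ f : Lp ℂ 2 μ, ⇑(X f) =ᵐ[μ] fun ω => φ ω * f ω} :=
  not_localizing_Linfty_of_no_atoms_aux hNoAtoms
end

section
/- Let μ be the normalized Haar measure on the torus 𝕋, let A ⊆ 𝕋 be a measurable set with μ(A) > 0, let (n_j) be a strictly increasing sequence of positive integers, and set A_j = {z ∈ 𝕋 : z^{n_j} ∈ A}. Then μ(⋂_{k≥1} ⋃_{j≥k} A_j) = 1, i.e. almost every z ∈ 𝕋 belongs to infinitely many of the sets A_j. -/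
open Filter Topology MeasureTheory

noncomputable instance : MeasurableSpace Circle := borel Circle
instance : BorelSpace Circle := ⟨rfl⟩

lemma circle_exp_nat_mul (x : ℝ) (N : ℕ) : Circle.exp (N * x) = Circle.exp x ^ N := by
  induction N with
  | zero => simp [Circle.exp_zero]
  | succ k ih =>
    rw [pow_succ, ← ih, ← Circle.exp_add]
    push_cast
    ring_nf

lemma circle_pow_surjective {N : ℕ} (hN : 0 < N) :
    Function.Surjective (fun z : Circle => z ^ N) := by
  intro w
  refine ⟨Circle.exp (Complex.arg (w : ℂ) / N), ?_⟩
  simp only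
  rw [← circle_exp_nat_mul]
  rw [mul_div_cancel₀ _ (by exact_mod_cast hN.ne' : (N : ℝ) ≠ 0)]
  exact Circle.exp_arg w

lemma measurePreserving_circle_pow (μ : Measure Circle) [μ.IsHaarMeasure]
    [IsProbabilityMeasure μ] {N : ℕ} (hN : 0 < N) :
    MeasurePreserving (fun z : Circle => z ^ N) μ μ := by
  have hcont : Continuous (fun z : Circle => z ^ N) := continuous_pow N
  have h1 : (Measure.map (powMonoidHom N : Circle →* Circle) μ).IsHaarMeasure :=
    Measure.isHaarMeasure_map_of_isFiniteMeasure μ (powMonoidHom N) hcont (circle_pow_surjective hN)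
  have h1' : (Measure.map (fun z : Circle => z ^ N) μ).IsHaarMeasure := h1
  have h2 : IsProbabilityMeasure (Measure.map (fun z : Circle => z ^ N) μ) :=
    Measure.isProbabilityMeasure_map hcont.measurable.aemeasurable
  exact ⟨hcont.measurable,
    Measure.isHaarMeasure_eq_of_isProbabilityMeasure _ μ⟩

lemma circle_exp_int_mul (x : ℝ) (m : ℤ) : Circle.exp (m * x) = Circle.exp x ^ m := by
  have h := map_zsmul Circle.expHom m x
  have h1 : Circle.expHom (m • x) = Additive.ofMul (Circle.exp (m * x)) := by
    norm_num [zsmul_eq_mul]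
  have h2 : (m • Circle.expHom x) = Additive.ofMul (Circle.exp x ^ m) := by
    rw [show Circle.expHom x = Additive.ofMul (Circle.exp x) from rfl, ← ofMul_zpow]
  rw [h1, h2] at h
  exact Additive.ofMul.injective h

/-- The characters of the circle, as continuous maps. -/
noncomputable def chr (m : ℤ) : C(Circle, ℂ) :=
  ⟨fun z => ((z ^ m : Circle) : ℂ), by
    exact continuous_subtype_val.comp (continuous_zpow m)⟩

lemma chr_apply (m : ℤ) (z : Circle) : chr m z = ((z ^ m : Circle) : ℂ) := rfl

lemma chr_mul (a b : ℤ) : chr a * chr b = chr (a + b) := by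
  ext z
  simp [chr_apply, zpow_add]

lemma chr_zero : chr 0 = 1 := by ext z; simp [chr_apply]

lemma star_chr (m : ℤ) : star (chr m) = chr (-m) := by
  ext z
  simp only [ContinuousMap.star_apply, chr_apply, RCLike.star_def]
  rw [← Circle.coe_inv_eq_conj, ← zpow_neg]

lemma integral_chr (μ : Measure Circle) [μ.IsHaarMeasure] [IsProbabilityMeasure μ]
    {m : ℤ} (hm : m ≠ 0) : ∫ z, chr m z ∂μ = 0 := by
  set w : Circle := Circle.exp (Real.pi / m) with hw
  have hwm : ((w ^ m : Circle) : ℂ) = -1 := by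
    have h1 : w ^ m = Circle.exp Real.pi := by
      rw [← circle_exp_int_mul, mul_div_cancel₀ _ (by exact_mod_cast hm : (m : ℝ) ≠ 0)]
    rw [h1]
    simp [Circle.coe_exp, Complex.exp_pi_mul_I]
  have key : ∫ z, chr m z ∂μ = ((w ^ m : Circle) : ℂ) * ∫ z, chr m z ∂μ := by
    conv_lhs => rw [← MeasureTheory.integral_mul_left_eq_self (fun z => chr m z) w]
    rw [← integral_const_mul]
    congr 1
    ext z
    simp [chr_apply, mul_zpow]
  have := key
  rw [hwm] at this
  linear_combination (1/2 : ℂ) * this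

noncomputable def trigPoly : Submodule ℂ C(Circle, ℂ) := Submodule.span ℂ (Set.range chr)

lemma chr_mem_trigPoly (m : ℤ) : chr m ∈ trigPoly := Submodule.subset_span ⟨m, rfl⟩

lemma trigPoly_one_mem : (1 : C(Circle, ℂ)) ∈ trigPoly := chr_zero ▸ chr_mem_trigPoly 0

lemma trigPoly_mul_mem {f g : C(Circle, ℂ)} (hf : f ∈ trigPoly) (hg : g ∈ trigPoly) :
    f * g ∈ trigPoly := by
  have h : trigPoly * trigPoly ≤ trigPoly := by
    rw [trigPoly, Submodule.span_mul_span]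
    apply Submodule.span_le.2
    rintro x ⟨f, hf, g, hg, rfl⟩
    obtain ⟨a, rfl⟩ := hf
    obtain ⟨b, rfl⟩ := hg
    show chr a * chr b ∈ Submodule.span ℂ (Set.range chr)
    rw [chr_mul]
    exact Submodule.subset_span ⟨a + b, rfl⟩
  exact h (Submodule.mul_mem_mul hf hg)

lemma trigPoly_star_mem {f : C(Circle, ℂ)} (hf : f ∈ trigPoly) : star f ∈ trigPoly := by
  induction hf using Submodule.span_induction with
  | mem x h =>
    obtain ⟨m, rfl⟩ := h
    rw [star_chr]
    exact chr_mem_trigPoly _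
  | zero => simp only [star_zero]; exact trigPoly.zero_mem
  | add x y hx hy ihx ihy => rw [star_add]; exact trigPoly.add_mem ihx ihy
  | smul a x hx ih => rw [star_smul]; exact trigPoly.smul_mem _ ih

noncomputable def trigAlg : StarSubalgebra ℂ C(Circle, ℂ) where
  carrier := trigPoly
  mul_mem' := trigPoly_mul_mem
  one_mem' := trigPoly_one_mem
  add_mem' := fun h h' => trigPoly.add_mem h h'
  zero_mem' := trigPoly.zero_mem
  algebraMap_mem' := fun c => by
    rw [Algebra.algebraMap_eq_smul_one]
    exact trigPoly.smul_mem _ trigPoly_one_mem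
  star_mem' := trigPoly_star_mem

lemma trigPoly_dense (g : C(Circle, ℂ)) {ε : ℝ} (hε : 0 < ε) :
    ∃ p ∈ trigPoly, ‖g - p‖ ≤ ε := by
  have hsep : trigAlg.SeparatesPoints := by
    intro z w hzw
    refine ⟨_, ⟨chr 1, chr_mem_trigPoly 1, rfl⟩, ?_⟩
    simp only [chr_apply, zpow_one]
    exact fun h => hzw (Circle.coe_injective h)
  have htop := ContinuousMap.starSubalgebra_topologicalClosure_eq_top_of_separatesPoints
    trigAlg hsep
  have hg : g ∈ trigAlg.topologicalClosure := htop ▸ Set.mem_univ g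
  obtain ⟨p, hp, hdist⟩ := Metric.mem_closure_iff.1 hg ε hε
  exact ⟨p, hp, by rw [dist_eq_norm] at hdist; exact hdist.le⟩

variable {μ : Measure Circle} [μ.IsHaarMeasure] [IsProbabilityMeasure μ]


lemma cont_integrable {φ : Circle → ℂ} (h : Continuous φ) : Integrable φ μ :=
  h.integrable_of_hasCompactSupport (isClosed_tsupport φ).isCompact

lemma integrable_contMap_mix (f g : C(Circle, ℂ)) (N : ℕ) :
    Integrable (fun z => f (z ^ N) * g z) μ :=
  cont_integrable (((map_continuous f).comp (continuous_pow N)).mul (map_continuous g))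

lemma chr_pow (a : ℤ) (N : ℕ) (z : Circle) : chr a (z ^ N) = chr ((N : ℤ) * a) z := by
  simp only [chr_apply]
  rw [← zpow_natCast, ← zpow_mul]

lemma trig_eventually_chr (a : ℤ) (g : C(Circle, ℂ)) (hg : g ∈ trigPoly) :
    ∀ᶠ N : ℕ in atTop,
      ∫ z, chr a (z ^ N) * g z ∂μ = (∫ z, chr a z ∂μ) * ∫ z, g z ∂μ := by
  induction hg using Submodule.span_induction with
  | mem g hgm =>
    obtain ⟨b, rfl⟩ := hgm
    rcases eq_or_ne a 0 with rfl | ha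
    · refine Filter.Eventually.of_forall fun N => ?_
      have h1 : ∀ z : Circle, chr 0 (z ^ N) = 1 := fun z => by simp [chr_apply]
      have h2 : ∫ z, chr 0 z ∂μ = 1 := by
        simp only [chr_zero]
        simpa using integral_const (μ := μ) (1 : ℂ)
      simp only [h1, one_mul, h2]
    · filter_upwards [Filter.eventually_ge_atTop (b.natAbs + 1)] with N hN
      have hkey : (N : ℤ) * a + b ≠ 0 := by
        intro h
        have h1 : (N : ℤ) * a = -b := by linarith
        have h2 : N * a.natAbs = b.natAbs := by
          have := congrArg Int.natAbs h1
          simpa [Int.natAbs_mul] using this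
        have h3 : N ≤ N * a.natAbs := Nat.le_mul_of_pos_right N (Int.natAbs_pos.2 ha)
        omega
      have hL : ∀ z : Circle, chr a (z ^ N) * chr b z = chr ((N : ℤ) * a + b) z := by
        intro z
        rw [chr_pow, ← chr_mul]
        rfl
      simp only [hL]
      rw [integral_chr _ hkey, integral_chr _ ha, zero_mul]
  | zero =>
    refine Filter.Eventually.of_forall fun N => ?_
    simp
  | add g₁ g₂ hg₁ hg₂ ih₁ ih₂ =>
    filter_upwards [ih₁, ih₂] with N h1 h2
    simp only [ContinuousMap.add_apply, mul_add]
    rw [integral_add (integrable_contMap_mix _ _ _) (integrable_contMap_mix _ _ _), h1, h2,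
      integral_add (cont_integrable (map_continuous g₁)) (cont_integrable (map_continuous g₂))]
    ring
  | smul c g' hg' ih =>
    filter_upwards [ih] with N h1
    simp only [ContinuousMap.smul_apply, mul_smul_comm]
    rw [integral_smul, integral_smul, h1]
    simp only [smul_eq_mul]
    ring

lemma trig_eventually (f : C(Circle, ℂ)) (hf : f ∈ trigPoly)
    (g : C(Circle, ℂ)) (hg : g ∈ trigPoly) :
    ∀ᶠ N : ℕ in atTop, ∫ z, f (z ^ N) * g z ∂μ = (∫ z, f z ∂μ) * ∫ z, g z ∂μ := by
  induction hf using Submodule.span_induction with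
  | mem f hfm =>
    obtain ⟨a, rfl⟩ := hfm
    exact trig_eventually_chr a g hg
  | zero =>
    refine Filter.Eventually.of_forall fun N => ?_
    simp
  | add f₁ f₂ hf₁ hf₂ ih₁ ih₂ =>
    filter_upwards [ih₁, ih₂] with N h1 h2
    simp only [ContinuousMap.add_apply, add_mul]
    rw [integral_add (integrable_contMap_mix _ _ _) (integrable_contMap_mix _ _ _), h1, h2,
      integral_add (cont_integrable (map_continuous f₁)) (cont_integrable (map_continuous f₂))]
    ring
  | smul c f' hf' ih =>
    filter_upwards [ih] with N h1
    simp only [ContinuousMap.smul_apply, smul_mul_assoc]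
    rw [integral_smul, integral_smul, h1]
    simp only [smul_eq_mul]
    ring

lemma bdd_integrable {φ : Circle → ℂ} (h : AEStronglyMeasurable φ μ) (C : ℝ)
    (hb : ∀ z, ‖φ z‖ ≤ C) : Integrable φ μ :=
  Integrable.mono' (integrable_const C) h (Filter.Eventually.of_forall hb)

lemma ind_comp (A : Set Circle) (N : ℕ) (z : Circle) :
    A.indicator (fun _ => (1 : ℂ)) (z ^ N)
      = ((fun w : Circle => w ^ N) ⁻¹' A).indicator (fun _ => (1 : ℂ)) z := by
  by_cases h : z ^ N ∈ A <;> simp [Set.indicator_apply, Set.mem_preimage, h]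

lemma ind_norm_le (A : Set Circle) (z : Circle) :
    ‖A.indicator (fun _ => (1 : ℂ)) z‖ ≤ 1 := by
  by_cases h : z ∈ A <;> simp [Set.indicator_apply, h]

set_option maxHeartbeats 2000000 in
lemma mix_complex (m : ℕ → ℕ) (hm : Tendsto m atTop atTop) (hm0 : ∀ j, 0 < m j)
    (A E : Set Circle) (hA : MeasurableSet A) (hE : MeasurableSet E) :
    Tendsto (fun j => ∫ z, (A.indicator (fun _ => (1 : ℂ))) (z ^ m j)
        * (E.indicator (fun _ => (1 : ℂ))) z ∂μ) atTop
      (𝓝 ((∫ z, A.indicator (fun _ => (1 : ℂ)) z ∂μ)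
        * ∫ z, E.indicator (fun _ => (1 : ℂ)) z ∂μ)) := by
  set f : Circle → ℂ := A.indicator (fun _ => (1 : ℂ)) with hf
  set g : Circle → ℂ := E.indicator (fun _ => (1 : ℂ)) with hg
  have hfm : Measurable f := measurable_const.indicator hA
  have hgm : Measurable g := measurable_const.indicator hE
  have hfb : ∀ z, ‖f z‖ ≤ 1 := ind_norm_le A
  have hgb : ∀ z, ‖g z‖ ≤ 1 := ind_norm_le E
  -- measurability of compositions
  have hfcm : ∀ N : ℕ, Measurable (fun z : Circle => f (z ^ N)) := fun N =>
    hfm.comp (continuous_pow N).measurable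
  rw [Metric.tendsto_atTop]
  intro ε hε
  set δ : ℝ := min (ε / 6) 1 with hδdef
  have hδ0 : 0 < δ := lt_min (by linarith) one_pos
  have hδ1 : δ ≤ 1 := min_le_right _ _
  have hδε : δ ≤ ε / 6 := min_le_left _ _
  -- approximate f by a trig poly p with ∫ ‖f - p‖ ≤ δ
  have approx : ∀ (u : Circle → ℂ), Measurable u → (∀ z, ‖u z‖ ≤ 1) → ∀ {η : ℝ}, 0 < η →
      ∃ p : C(Circle, ℂ), p ∈ trigPoly ∧ ∫ z, ‖u z - p z‖ ∂μ ≤ η := by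
    intro u hu hub η hη
    have hui : Integrable u μ := bdd_integrable hu.aestronglyMeasurable 1 hub
    obtain ⟨φ, hφ1, hφ2⟩ := hui.exists_boundedContinuous_integral_sub_le (by linarith : 0 < η/2)
    obtain ⟨p, hp, hpφ⟩ := trigPoly_dense φ.toContinuousMap (by linarith : 0 < η/2)
    refine ⟨p, hp, ?_⟩
    have h1 : ∀ z, ‖u z - p z‖ ≤ ‖u z - φ z‖ + ‖φ z - p z‖ := fun z =>
      norm_sub_le_norm_sub_add_norm_sub _ _ _
    have h2 : ∀ z, ‖φ z - p z‖ ≤ η / 2 := by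
      intro z
      have := (φ.toContinuousMap - p).norm_coe_le_norm z
      simpa using this.trans hpφ
    have hi1 : Integrable (fun z => ‖u z - φ z‖) μ :=
      (hui.sub (cont_integrable φ.continuous)).norm
    have hi2 : Integrable (fun z => ‖φ z - p z‖) μ :=
      ((cont_integrable φ.continuous).sub (cont_integrable (map_continuous p))).norm
    calc ∫ z, ‖u z - p z‖ ∂μ ≤ ∫ z, (‖u z - φ z‖ + ‖φ z - p z‖) ∂μ := by
          refine integral_mono ?_ (hi1.add hi2) h1
          exact ((hui.sub (cont_integrable (map_continuous p))).norm)
      _ = (∫ z, ‖u z - φ z‖ ∂μ) + ∫ z, ‖φ z - p z‖ ∂μ := integral_add hi1 hi2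
      _ ≤ η / 2 + η / 2 := by
          refine add_le_add hφ1 ?_
          calc ∫ z, ‖φ z - p z‖ ∂μ ≤ ∫ _z, (η/2 : ℝ) ∂μ := integral_mono hi2
                (integrable_const _) h2
            _ = η / 2 := by simp
      _ = η := by ring
  obtain ⟨p, hpmem, hpapp⟩ := approx f hfm hfb hδ0
  set Cp : ℝ := ‖p‖ with hCp
  have hCp0 : 0 ≤ Cp := norm_nonneg _
  have hδ'0 : 0 < δ / (Cp + 1) := by positivity
  obtain ⟨q, hqmem, hqapp⟩ := approx g hgm hgb hδ'0
  -- eventual equality for the trig polys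
  obtain ⟨K₀, hK₀⟩ := Filter.eventually_atTop.1 (trig_eventually p hpmem q hqmem (μ := μ))
  obtain ⟨K₁, hK₁⟩ := Filter.eventually_atTop.1 (hm.eventually_ge_atTop K₀)
  refine ⟨K₁, fun j hj => ?_⟩
  set N : ℕ := m j with hNdef
  have hNpos : 0 < N := hm0 j
  have hmp : MeasurePreserving (fun z : Circle => z ^ N) μ μ :=
    measurePreserving_circle_pow μ hNpos
  have hpc : Continuous (fun z : Circle => p (z ^ N)) :=
    (map_continuous p).comp (continuous_pow N)
  have hqi : Integrable (fun z => q z) μ := cont_integrable (map_continuous q)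
  have hgi : Integrable g μ := bdd_integrable hgm.aestronglyMeasurable 1 hgb
  have hfi : Integrable f μ := bdd_integrable hfm.aestronglyMeasurable 1 hfb
  have hpb : ∀ z : Circle, ‖p z‖ ≤ Cp := fun z => p.norm_coe_le_norm z
  -- integrability of all the integrands
  have ia : Integrable (fun z => (f (z ^ N) - p (z ^ N)) * g z) μ := by
    refine bdd_integrable ?_ ((1 + Cp) * 1) fun z => ?_
    · exact (((hfcm N).sub hpc.measurable).mul hgm).aestronglyMeasurable
    · rw [norm_mul]
      have h1 : ‖f (z ^ N) - p (z ^ N)‖ ≤ 1 + Cp :=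
        (norm_sub_le _ _).trans (add_le_add (hfb _) (hpb _))
      exact mul_le_mul h1 (hgb z) (norm_nonneg _) (by linarith)
  have ib : Integrable (fun z => p (z ^ N) * (g z - q z)) μ := by
    refine bdd_integrable ?_ (Cp * (1 + ‖q‖)) fun z => ?_
    · exact (hpc.measurable.mul (hgm.sub (map_continuous q).measurable)).aestronglyMeasurable
    · rw [norm_mul]
      have h1 : ‖g z - q z‖ ≤ 1 + ‖q‖ :=
        (norm_sub_le _ _).trans (add_le_add (hgb _) (q.norm_coe_le_norm _))
      exact mul_le_mul (hpb _) h1 (norm_nonneg _) hCp0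
  have i1 : Integrable (fun z => f (z ^ N) * g z) μ := by
    refine bdd_integrable (((hfcm N).mul hgm).aestronglyMeasurable) 1 fun z => ?_
    rw [norm_mul]
    exact mul_le_one₀ (hfb _) (norm_nonneg _) (hgb _)
  have i2 : Integrable (fun z => p (z ^ N) * q z) μ := integrable_contMap_mix p q N
  -- change of variables : ∫ ‖f (z^N) - p (z^N)‖ = ∫ ‖f - p‖
  have hcov : ∫ z, ‖f (z ^ N) - p (z ^ N)‖ ∂μ = ∫ z, ‖f z - p z‖ ∂μ := by
    have hsm : AEStronglyMeasurable (fun y : Circle => ‖f y - p y‖)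
        (Measure.map (fun z : Circle => z ^ N) μ) := by
      rw [hmp.map_eq]
      exact ((hfm.sub (map_continuous p).measurable).norm).aestronglyMeasurable
    calc ∫ z, ‖f (z ^ N) - p (z ^ N)‖ ∂μ
        = ∫ y, ‖f y - p y‖ ∂(Measure.map (fun z : Circle => z ^ N) μ) :=
          (integral_map (continuous_pow N).measurable.aemeasurable hsm).symm
      _ = ∫ z, ‖f z - p z‖ ∂μ := by rw [hmp.map_eq]
  -- step A : decomposition
  have hsplit : (∫ z, f (z ^ N) * g z ∂μ) - ∫ z, p (z ^ N) * q z ∂μ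
      = (∫ z, (f (z ^ N) - p (z ^ N)) * g z ∂μ) + ∫ z, p (z ^ N) * (g z - q z) ∂μ := by
    rw [← integral_sub i1 i2, ← integral_add ia ib]
    congr 1
    funext z
    ring
  -- step B
  have hB : ‖∫ z, (f (z ^ N) - p (z ^ N)) * g z ∂μ‖ ≤ δ := by
    calc ‖∫ z, (f (z ^ N) - p (z ^ N)) * g z ∂μ‖
        ≤ ∫ z, ‖(f (z ^ N) - p (z ^ N)) * g z‖ ∂μ := norm_integral_le_integral_norm _
      _ ≤ ∫ z, ‖f (z ^ N) - p (z ^ N)‖ ∂μ := by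
          refine integral_mono ia.norm ?_ fun z => ?_
          · exact (((bdd_integrable (hfcm N).aestronglyMeasurable 1
              fun z => hfb _).sub (cont_integrable hpc)).norm)
          · rw [norm_mul]
            exact mul_le_of_le_one_right (norm_nonneg _) (hgb z)
      _ = ∫ z, ‖f z - p z‖ ∂μ := hcov
      _ ≤ δ := hpapp
  -- step C
  have hC : ‖∫ z, p (z ^ N) * (g z - q z) ∂μ‖ ≤ δ := by
    have hgq : Integrable (fun z => ‖g z - q z‖) μ := (hgi.sub hqi).norm
    calc ‖∫ z, p (z ^ N) * (g z - q z) ∂μ‖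
        ≤ ∫ z, ‖p (z ^ N) * (g z - q z)‖ ∂μ := norm_integral_le_integral_norm _
      _ ≤ ∫ z, Cp * ‖g z - q z‖ ∂μ := by
          refine integral_mono ib.norm (hgq.const_mul Cp) fun z => ?_
          rw [norm_mul]
          exact mul_le_mul_of_nonneg_right (hpb _) (norm_nonneg _)
      _ = Cp * ∫ z, ‖g z - q z‖ ∂μ := integral_const_mul Cp _
      _ ≤ Cp * (δ / (Cp + 1)) := by
          exact mul_le_mul_of_nonneg_left hqapp hCp0
      _ ≤ (Cp + 1) * (δ / (Cp + 1)) := by gcongr; linarith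
      _ = δ := by field_simp
  -- step D
  have hD : ∫ z, p (z ^ N) * q z ∂μ = (∫ z, p z ∂μ) * ∫ z, q z ∂μ := hK₀ N (hK₁ j hj)
  -- step E
  have hgq' : ‖(∫ z, q z ∂μ) - ∫ z, g z ∂μ‖ ≤ δ := by
    rw [← integral_sub hqi hgi]
    calc ‖∫ z, (q z - g z) ∂μ‖ ≤ ∫ z, ‖q z - g z‖ ∂μ := norm_integral_le_integral_norm _
      _ = ∫ z, ‖g z - q z‖ ∂μ := by simp_rw [norm_sub_rev]
      _ ≤ δ / (Cp + 1) := hqapp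
      _ ≤ δ := by
          rw [div_le_iff₀ (by linarith : (0:ℝ) < Cp + 1)]
          nlinarith
  have hfp' : ‖(∫ z, p z ∂μ) - ∫ z, f z ∂μ‖ ≤ δ := by
    rw [← integral_sub (cont_integrable (map_continuous p)) hfi]
    calc ‖∫ z, (p z - f z) ∂μ‖ ≤ ∫ z, ‖p z - f z‖ ∂μ := norm_integral_le_integral_norm _
      _ = ∫ z, ‖f z - p z‖ ∂μ := by simp_rw [norm_sub_rev]
      _ ≤ δ := hpapp
  have hgn : ‖∫ z, g z ∂μ‖ ≤ 1 := by
    calc ‖∫ z, g z ∂μ‖ ≤ ∫ z, ‖g z‖ ∂μ := norm_integral_le_integral_norm _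
      _ ≤ ∫ _z, (1:ℝ) ∂μ := integral_mono hgi.norm (integrable_const _) hgb
      _ = 1 := by simp
  have hfn : ‖∫ z, f z ∂μ‖ ≤ 1 := by
    calc ‖∫ z, f z ∂μ‖ ≤ ∫ z, ‖f z‖ ∂μ := norm_integral_le_integral_norm _
      _ ≤ ∫ _z, (1:ℝ) ∂μ := integral_mono hfi.norm (integrable_const _) hfb
      _ = 1 := by simp
  have hqn : ‖∫ z, q z ∂μ‖ ≤ 2 := by
    calc ‖∫ z, q z ∂μ‖ = ‖((∫ z, q z ∂μ) - ∫ z, g z ∂μ) + ∫ z, g z ∂μ‖ := by ring_nf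
      _ ≤ ‖(∫ z, q z ∂μ) - ∫ z, g z ∂μ‖ + ‖∫ z, g z ∂μ‖ := norm_add_le _ _
      _ ≤ δ + 1 := add_le_add hgq' hgn
      _ ≤ 2 := by linarith
  have hE : ‖(∫ z, p z ∂μ) * (∫ z, q z ∂μ) - (∫ z, f z ∂μ) * ∫ z, g z ∂μ‖ ≤ 3 * δ := by
    have hid : (∫ z, p z ∂μ) * (∫ z, q z ∂μ) - (∫ z, f z ∂μ) * ∫ z, g z ∂μ
        = ((∫ z, p z ∂μ) - ∫ z, f z ∂μ) * (∫ z, q z ∂μ)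
          + (∫ z, f z ∂μ) * ((∫ z, q z ∂μ) - ∫ z, g z ∂μ) := by ring
    rw [hid]
    calc ‖_ + _‖ ≤ ‖((∫ z, p z ∂μ) - ∫ z, f z ∂μ) * (∫ z, q z ∂μ)‖
          + ‖(∫ z, f z ∂μ) * ((∫ z, q z ∂μ) - ∫ z, g z ∂μ)‖ := norm_add_le _ _
      _ ≤ δ * 2 + 1 * δ := by
          rw [norm_mul, norm_mul]
          exact add_le_add (mul_le_mul hfp' hqn (norm_nonneg _) (by linarith))
            (mul_le_mul hfn hgq' (norm_nonneg _) zero_le_one)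
      _ = 3 * δ := by ring
  -- put everything together
  rw [dist_eq_norm]
  calc ‖(∫ z, f (z ^ N) * g z ∂μ) - (∫ z, f z ∂μ) * ∫ z, g z ∂μ‖
      = ‖((∫ z, f (z ^ N) * g z ∂μ) - ∫ z, p (z ^ N) * q z ∂μ)
        + ((∫ z, p (z ^ N) * q z ∂μ) - (∫ z, f z ∂μ) * ∫ z, g z ∂μ)‖ := by ring_nf
    _ ≤ ‖(∫ z, f (z ^ N) * g z ∂μ) - ∫ z, p (z ^ N) * q z ∂μ‖
        + ‖(∫ z, p (z ^ N) * q z ∂μ) - (∫ z, f z ∂μ) * ∫ z, g z ∂μ‖ := norm_add_le _ _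
    _ ≤ (δ + δ) + 3 * δ := by
        refine add_le_add ?_ ?_
        · rw [hsplit]
          exact (norm_add_le _ _).trans (add_le_add hB hC)
        · rw [hD]
          exact hE
    _ = 5 * δ := by ring
    _ < ε := by
        have : 5 * δ ≤ 5 * (ε / 6) := by linarith
        linarith

lemma ind_mul_ind (A E : Set Circle) (N : ℕ) (z : Circle) :
    A.indicator (fun _ => (1 : ℂ)) (z ^ N) * E.indicator (fun _ => (1 : ℂ)) z
      = ({w : Circle | w ^ N ∈ A} ∩ E).indicator (fun _ => (1 : ℂ)) z := by
  by_cases h1 : z ^ N ∈ A <;> by_cases h2 : z ∈ E <;>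
    simp [Set.indicator_apply, h1, h2, Set.mem_setOf_eq]

lemma integral_ind (S : Set Circle) (hS : MeasurableSet S) :
    ∫ z, S.indicator (fun _ => (1 : ℂ)) z ∂μ = ((μ S).toReal : ℂ) := by
  rw [integral_indicator_const (1 : ℂ) hS]
  simp [Complex.real_smul, Measure.real]

/-- If `A ⊆ 𝕋` is measurable with `μ(A) > 0` for the normalized Haar measure `μ`, and
`(n_j)` is a strictly increasing sequence of positive integers, then almost every `z ∈ 𝕋`
satisfies `z ^ (n_j) ∈ A` for infinitely many `j`. -/
theorem haar_measure_liminf_pow_preimage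
    (μ : Measure Circle) [μ.IsHaarMeasure] [IsProbabilityMeasure μ]
    (A : Set Circle) (hA : MeasurableSet A) (hA0 : 0 < μ A)
    (n : ℕ → ℕ) (hn : StrictMono n) (hn0 : ∀ j, 0 < n j) :
    μ (⋂ k : ℕ, ⋃ j : ℕ, ⋃ (_ : k ≤ j), {z : Circle | z ^ (n j) ∈ A}) = 1 := by
  have hSm : ∀ N : ℕ, MeasurableSet {z : Circle | z ^ N ∈ A} := fun N =>
    hA.preimage (continuous_pow N).measurable
  set B : ℕ → Set Circle := fun k => ⋃ j : ℕ, ⋃ (_ : k ≤ j), {z : Circle | z ^ (n j) ∈ A}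
    with hB
  have hBm : ∀ k, MeasurableSet (B k) := fun k =>
    MeasurableSet.iUnion fun j => MeasurableSet.iUnion fun _ => hSm (n j)
  have key : ∀ k, μ (B k)ᶜ = 0 := by
    intro k
    set E : Set Circle := (B k)ᶜ with hE
    have hEm : MeasurableSet E := (hBm k).compl
    have hmix := mix_complex (μ := μ) n hn.tendsto_atTop hn0 A E hA hEm
    -- the sequence is eventually 0
    have hzero : ∀ j, k ≤ j →
        (∫ z, (A.indicator (fun _ => (1 : ℂ))) (z ^ n j)
          * (E.indicator (fun _ => (1 : ℂ))) z ∂μ) = 0 := by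
      intro j hj
      have hempty : {w : Circle | w ^ n j ∈ A} ∩ E = ∅ := by
        ext z
        simp only [Set.mem_inter_iff, Set.mem_setOf_eq, Set.mem_empty_iff_false, iff_false,
          not_and, hE, Set.mem_compl_iff, not_not]
        intro hz
        exact Set.mem_iUnion.2 ⟨j, Set.mem_iUnion.2 ⟨hj, hz⟩⟩
      simp only [ind_mul_ind A E (n j), hempty]
      simp
    have h0 : Tendsto (fun j => ∫ z, (A.indicator (fun _ => (1 : ℂ))) (z ^ n j)
        * (E.indicator (fun _ => (1 : ℂ))) z ∂μ) atTop (𝓝 (0 : ℂ)) := by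
      refine Tendsto.congr' ?_ tendsto_const_nhds
      filter_upwards [Filter.eventually_ge_atTop k] with j hj
      exact (hzero j hj).symm
    have huniq := tendsto_nhds_unique hmix h0
    rw [integral_ind A hA, integral_ind E hEm] at huniq
    have hre : (μ A).toReal * (μ E).toReal = 0 := by
      have := congrArg Complex.re huniq
      simpa using this
    have hA' : (μ A).toReal ≠ 0 :=
      (ENNReal.toReal_pos hA0.ne' (measure_ne_top μ A)).ne'
    have hE0 : (μ E).toReal = 0 := by
      rcases mul_eq_zero.1 hre with h | h
      · exact absurd h hA'
      · exact h
    exact (ENNReal.toReal_eq_zero_iff _).1 hE0 |>.resolve_right (measure_ne_top μ E)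
  have hcompl : μ (⋂ k, B k)ᶜ = 0 := by
    rw [Set.compl_iInter]
    exact measure_iUnion_null key
  have := (prob_compl_eq_zero_iff (MeasurableSet.iInter fun k => hBm k)).1 hcompl
  exact this
end

section
/- For every δ with 0 < δ < 1 there exist an open set U ⊆ ℂ containing the closed unit disc and a holomorphic function h on U such that: (1) h(1) = 0; (2) |h(z)| ≤ 1 for every z in the closed unit disc; and (3) μ({z ∈ 𝕋 : |h(z) − 1| > δ}) < δ, where μ is the normalized Haar measure on the unit circle 𝕋. -/
open Filter Topology MeasureTheory

lemma normSq_exp_sub_one (θ : ℝ) :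
    Complex.normSq (Complex.exp (θ * Complex.I) - 1) = 2 - 2 * Real.cos θ := by
  rw [show (θ : ℂ) * Complex.I = (θ:ℂ) * Complex.I from rfl, Complex.exp_mul_I]
  simp [Complex.normSq_apply, Complex.add_re, Complex.add_im, Complex.mul_re, Complex.mul_im,
    Complex.I_re, Complex.I_im, Complex.cos_ofReal_re, Complex.cos_ofReal_im,
    Complex.sin_ofReal_re, Complex.sin_ofReal_im]
  have := Real.sin_sq_add_cos_sq θ
  nlinarith

lemma cos_le_cos_aux {N m : ℕ} (hN : 2 ≤ N) (hm1 : 1 ≤ m) (hm2 : m ≤ N - 1) :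
    Real.cos (2 * Real.pi * m / N) ≤ Real.cos (2 * Real.pi / N) := by
  have hNpos : (0:ℝ) < N := by positivity
  have hmN : (m:ℝ) ≤ (N:ℝ) - 1 := by
    have h : (m:ℝ) ≤ ((N - 1 : ℕ) : ℝ) := by exact_mod_cast hm2
    rwa [Nat.cast_sub (by omega), Nat.cast_one] at h
  have hm1' : (1:ℝ) ≤ (m:ℝ) := by exact_mod_cast hm1
  set θ := 2 * Real.pi * m / N with hθ
  have hθ1 : 2 * Real.pi / N ≤ θ := by
    rw [hθ, div_le_div_iff_of_pos_right hNpos]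
    nlinarith [Real.pi_pos]
  have hθ2 : θ ≤ 2 * Real.pi - 2 * Real.pi / N := by
    have h : θ ≤ 2 * Real.pi * ((N:ℝ) - 1) / N := by
      rw [hθ, div_le_div_iff_of_pos_right hNpos]
      nlinarith [Real.pi_pos]
    calc θ ≤ 2 * Real.pi * ((N:ℝ) - 1) / N := h
      _ = 2 * Real.pi - 2 * Real.pi / N := by field_simp
  have hNge : (2:ℝ) ≤ N := by exact_mod_cast hN
  have hπN : 2 * Real.pi / N ≤ Real.pi := by
    rw [div_le_iff₀ hNpos]; nlinarith [Real.pi_pos]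
  by_cases hπ : θ ≤ Real.pi
  · exact Real.cos_le_cos_of_nonneg_of_le_pi (by positivity) hπ hθ1
  · have h : Real.cos θ = Real.cos (2 * Real.pi - θ) := (Real.cos_two_pi_sub θ).symm
    rw [h]
    exact Real.cos_le_cos_of_nonneg_of_le_pi (by positivity) (by linarith) (by linarith)

/-- For every `0 < δ < 1` there are an open set `U` containing the closed unit disc and a
holomorphic function `h` on `U` with `h(1) = 0`, `|h| ≤ 1` on the closed unit disc, and
`μ{z ∈ 𝕋 : |h(z) − 1| > δ} < δ` for the normalized Haar measure `μ` on the circle. -/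
theorem exists_holomorphic_small_near_one
    (μ : Measure Circle) [μ.IsHaarMeasure] [IsProbabilityMeasure μ]
    (δ : ℝ) (hδ0 : 0 < δ) (hδ1 : δ < 1) :
    ∃ (U : Set ℂ) (h : ℂ → ℂ), IsOpen U ∧ Metric.closedBall (0 : ℂ) 1 ⊆ U ∧
      DifferentiableOn ℂ h U ∧ h 1 = 0 ∧
      (∀ z ∈ Metric.closedBall (0 : ℂ) 1, ‖h z‖ ≤ 1) ∧
      μ {z : Circle | δ < ‖h ↑z - 1‖} < ENNReal.ofReal δ := by
  obtain ⟨N, hN⟩ := exists_nat_gt (1/δ)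
  have hδ' : (1:ℝ) < 1/δ := by rw [lt_div_iff₀ hδ0]; linarith
  have hN2 : 2 ≤ N := by
    have h1 : (1:ℝ) < N := lt_trans hδ' hN
    have h1' : 1 < N := by exact_mod_cast h1
    omega
  have hNpos : (0:ℝ) < N := by positivity
  have hNge : (2:ℝ) ≤ N := by exact_mod_cast hN2
  have hπN : Real.pi / N < Real.pi := by
    rw [div_lt_iff₀ hNpos]; nlinarith [Real.pi_pos]
  set c := Real.sin (Real.pi / N) with hc_def
  have hc : 0 < c := Real.sin_pos_of_pos_of_lt_pi (by positivity) hπN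
  set ε := c * δ / (2 * (δ + 1)) with hε_def
  have hε : 0 < ε := by positivity
  set r : ℝ := 1 + ε with hr_def
  refine ⟨Metric.ball 0 (1 + ε/2), fun z => (z - 1) / (z - (r:ℂ)),
    Metric.isOpen_ball, Metric.closedBall_subset_ball (by linarith), ?_, by simp, ?_, ?_⟩
  · apply DifferentiableOn.div (by fun_prop) (by fun_prop)
    intro z hz
    rw [Metric.mem_ball, dist_zero_right] at hz
    rw [sub_ne_zero]
    intro hzr
    rw [hzr, Complex.norm_real, Real.norm_eq_abs, abs_of_pos (by linarith : (0:ℝ) < r)] at hz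
    linarith
  · intro z hz
    rw [Metric.mem_closedBall, dist_zero_right] at hz
    have hre : z.re ≤ 1 := (Complex.re_le_norm z).trans (by simpa using hz)
    rw [norm_div]
    have hzr : (0:ℝ) < ‖z - (r:ℂ)‖ := by
      rw [norm_pos_iff, sub_ne_zero]
      intro hzr
      rw [hzr, Complex.norm_real, Real.norm_eq_abs, abs_of_pos (by linarith : (0:ℝ) < r)] at hz
      linarith
    rw [div_le_one hzr]
    have h1 : Complex.normSq (z - 1) ≤ Complex.normSq (z - (r:ℂ)) := by
      simp only [Complex.normSq_apply, Complex.sub_re, Complex.sub_im, Complex.one_re,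
        Complex.one_im, Complex.ofReal_re, Complex.ofReal_im]
      nlinarith
    calc ‖z - 1‖ = Real.sqrt (Complex.normSq (z - 1)) := by
          rw [Complex.norm_def]
      _ ≤ Real.sqrt (Complex.normSq (z - (r:ℂ))) := Real.sqrt_le_sqrt h1
      _ = ‖z - (r:ℂ)‖ := by rw [Complex.norm_def]
  · -- measure estimate
    set A : Set Circle := {w : Circle | ‖(w:ℂ) - 1‖ < c} with hA_def
    have hnormz : ∀ z : Circle, ‖(z:ℂ)‖ = 1 := fun z => by
      exact Circle.norm_coe z
    have hzr_ne : ∀ z : Circle, (z:ℂ) - (r:ℂ) ≠ 0 := by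
      intro z
      rw [sub_ne_zero]
      intro hzr
      have h := hnormz z
      rw [hzr, Complex.norm_real, Real.norm_eq_abs, abs_of_pos (by linarith : (0:ℝ) < r)] at h
      linarith
    have hBA : {z : Circle | δ < ‖((z:ℂ) - 1) / ((z:ℂ) - (r:ℂ)) - 1‖} ⊆ A := by
      intro z hz
      have hz' : δ < ‖((z:ℂ) - 1) / ((z:ℂ) - (r:ℂ)) - 1‖ := hz
      show ‖(z:ℂ) - 1‖ < c
      clear hz
      rename' hz' => hz
      have he : ((z:ℂ) - 1) / ((z:ℂ) - (r:ℂ)) - 1 = ((r:ℂ) - 1) / ((z:ℂ) - (r:ℂ)) := by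
        rw [div_sub_one (hzr_ne z)]
        congr 1
        ring
      rw [he, norm_div] at hz
      have hr1 : ‖(r:ℂ) - 1‖ = ε := by
        rw [show (r:ℂ) - 1 = ((ε:ℝ):ℂ) by rw [hr_def]; push_cast; ring, Complex.norm_real, Real.norm_eq_abs,
          abs_of_pos hε]
      rw [hr1] at hz
      have hzrpos : (0:ℝ) < ‖(z:ℂ) - (r:ℂ)‖ := norm_pos_iff.mpr (hzr_ne z)
      have hlt : ‖(z:ℂ) - (r:ℂ)‖ < ε / δ := by
        rw [lt_div_iff₀ hzrpos] at hz
        rw [lt_div_iff₀ hδ0]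
        nlinarith
      have htri : ‖(z:ℂ) - 1‖ ≤ ‖(z:ℂ) - (r:ℂ)‖ + ε := by
        calc ‖(z:ℂ) - 1‖ = ‖((z:ℂ) - (r:ℂ)) + ((r:ℂ) - 1)‖ := by ring_nf
          _ ≤ ‖(z:ℂ) - (r:ℂ)‖ + ‖(r:ℂ) - 1‖ := norm_add_le _ _
          _ = ‖(z:ℂ) - (r:ℂ)‖ + ε := by rw [hr1]
      have hεc : ε / δ + ε < c := by
        have heq : ε / δ + ε = c / 2 := by
          rw [hε_def]; field_simp; ring
        rw [heq]; linarith
      calc ‖(z:ℂ) - 1‖ ≤ ‖(z:ℂ) - (r:ℂ)‖ + ε := htri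
        _ < ε / δ + ε := by linarith
        _ < c := hεc
    have hAopen : IsOpen A :=
      isOpen_lt ((continuous_subtype_val.sub continuous_const).norm) continuous_const
    have hAm : MeasurableSet A := hAopen.measurableSet
    set f : ℕ → Circle := fun k => Circle.exp (2 * Real.pi * k / N) with hf_def
    have key : ∀ j k : ℕ, j < k → k < N → 2 * c ≤ ‖(f j : ℂ) - (f k : ℂ)‖ := by
      intro j k hjk hkN
      set m := k - j with hm_def
      have hm1 : 1 ≤ m := by omega
      have hm2 : m ≤ N - 1 := by omega
      have hfk : (f k : ℂ) = (f j : ℂ) * Complex.exp (((2 * Real.pi * m / N : ℝ) : ℂ) * Complex.I) := by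
        simp only [hf_def, Circle.coe_exp]
        rw [← Complex.exp_add]
        congr 1
        have hmr : (m:ℝ) = (k:ℝ) - j := by
          rw [hm_def, Nat.cast_sub (le_of_lt hjk)]
        push_cast [hmr]
        ring
      have hsub : (f j : ℂ) - (f k : ℂ)
          = (f j : ℂ) * (1 - Complex.exp (((2 * Real.pi * m / N : ℝ) : ℂ) * Complex.I)) := by
        rw [hfk]; ring
      rw [hsub, norm_mul, hnormz, one_mul, norm_sub_rev]
      have hsq : ‖Complex.exp (((2 * Real.pi * m / N : ℝ) : ℂ) * Complex.I) - 1‖ ^ 2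
          = 2 - 2 * Real.cos (2 * Real.pi * m / N) := by
        rw [Complex.sq_norm]
        exact normSq_exp_sub_one _
      have hcos : Real.cos (2 * Real.pi * m / N) ≤ Real.cos (2 * Real.pi / N) :=
        cos_le_cos_aux hN2 hm1 hm2
      have h4c : (2 * c) ^ 2 = 2 - 2 * Real.cos (2 * Real.pi / N) := by
        have h2 : Real.cos (2 * (Real.pi / N)) = 1 - 2 * Real.sin (Real.pi / N) ^ 2 := by
          rw [Real.cos_two_mul, Real.cos_sq']; ring
        rw [hc_def, show 2 * Real.pi / (N:ℝ) = 2 * (Real.pi / N) by ring, h2]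
        ring
      nlinarith [norm_nonneg (Complex.exp (((2 * Real.pi * m / N : ℝ) : ℂ) * Complex.I) - 1), hc]
    have hkey' : ∀ j k : ℕ, j < N → k < N → j ≠ k → 2 * c ≤ ‖(f j : ℂ) - (f k : ℂ)‖ := by
      intro j k hj hk hjk
      rcases lt_or_gt_of_ne hjk with h | h
      · exact key j k h hk
      · rw [norm_sub_rev]; exact key k j h hj
    have hdisj : (↑(Finset.range N) : Set ℕ).PairwiseDisjoint
        (fun k => (fun z => f k * z) ⁻¹' A) := by
      intro j hj k hk hjk
      simp only [Finset.coe_range, Set.mem_Iio] at hj hk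
      rw [Function.onFun, Set.disjoint_left]
      intro z hzj hzk
      simp only [Set.mem_preimage, hA_def, Set.mem_setOf_eq] at hzj hzk
      have hinv : ∀ w : ℕ, ((f w * z : Circle) : ℂ) - 1
          = (z:ℂ) * ((f w : ℂ) - ((z⁻¹ : Circle) : ℂ)) := by
        intro w
        rw [Circle.coe_mul, Circle.coe_inv, mul_sub, mul_inv_cancel₀ (Circle.coe_ne_zero z)]
        ring
      rw [hinv j, norm_mul, hnormz, one_mul] at hzj
      rw [hinv k, norm_mul, hnormz, one_mul] at hzk
      have htri : ‖(f j : ℂ) - (f k : ℂ)‖ < 2 * c := by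
        calc ‖(f j : ℂ) - (f k : ℂ)‖
            ≤ ‖(f j : ℂ) - ((z⁻¹ : Circle) : ℂ)‖ + ‖((z⁻¹ : Circle) : ℂ) - (f k : ℂ)‖ :=
              norm_sub_le_norm_sub_add_norm_sub _ _ _
          _ < c + c := by rw [norm_sub_rev ((z⁻¹ : Circle) : ℂ)] at *; linarith
          _ = 2 * c := by ring
      linarith [hkey' j k hj hk hjk]
    have hmeas : ∀ k ∈ Finset.range N, MeasurableSet ((fun z => f k * z) ⁻¹' A) := by
      intro k _
      exact (measurable_const_mul (f k)) hAm
    have hsum := measure_biUnion_finset (μ := μ) hdisj hmeas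
    have heach : ∀ k, μ ((fun z => f k * z) ⁻¹' A) = μ A := fun k =>
      measure_preimage_mul μ (f k) A
    have hle1 : (N : ENNReal) * μ A ≤ 1 := by
      calc (N : ENNReal) * μ A
          = ∑ k ∈ Finset.range N, μ ((fun z => f k * z) ⁻¹' A) := by
            simp [heach, Finset.sum_const, nsmul_eq_mul]
        _ = μ (⋃ k ∈ Finset.range N, (fun z => f k * z) ⁻¹' A) := hsum.symm
        _ ≤ μ Set.univ := measure_mono (Set.subset_univ _)
        _ = 1 := measure_univ
    have hAle : μ A ≤ (N : ENNReal)⁻¹ :=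
      ENNReal.le_inv_iff_mul_le.mpr (by rwa [mul_comm])
    have hNinv : ((N : ENNReal))⁻¹ < ENNReal.ofReal δ := by
      have h1 : ((N : ℝ))⁻¹ < δ := by
        rw [div_lt_iff₀ hδ0] at hN
        rw [inv_eq_one_div, div_lt_iff₀ hNpos]
        nlinarith
      calc ((N : ENNReal))⁻¹ = ENNReal.ofReal ((N:ℝ))⁻¹ := by
            rw [ENNReal.ofReal_inv_of_pos hNpos, ENNReal.ofReal_natCast]
      _ < ENNReal.ofReal δ := (ENNReal.ofReal_lt_ofReal_iff hδ0).mpr h1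
    calc μ {z : Circle | δ < ‖((z:ℂ) - 1) / ((z:ℂ) - (r:ℂ)) - 1‖} ≤ μ A := measure_mono hBA
      _ ≤ (N : ENNReal)⁻¹ := hAle
      _ < ENNReal.ofReal δ := hNinv
end

section
/- Let M_t be the position operator on the Banach space C[0,1] of continuous complex-valued functions on [0,1] with the supremum norm, defined by (M_t f)(t) = t f(t). If λ ∈ ℂ is an extended eigenvalue of M_t (i.e. there is a nonzero bounded operator X on C[0,1] with M_t X = λ X M_t), then λ is a real number with λ > 0. -/
set_option maxHeartbeats 1000000

open Filter Topology

/-- If `λ ∈ ℂ` is an extended eigenvalue of the position operator `(M f)(t) = t f(t)` on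
`C[0,1]`, i.e. `M X = λ X M` for some nonzero bounded operator `X`, then `λ` is a positive
real number. -/
theorem extended_eigenvalue_of_position_operator_is_positive_real
    (M : C(Set.Icc (0:ℝ) 1, ℂ) →L[ℂ] C(Set.Icc (0:ℝ) 1, ℂ))
    (hM : ∀ (f : C(Set.Icc (0:ℝ) 1, ℂ)) (t : Set.Icc (0:ℝ) 1),
      M f t = ((t : ℝ) : ℂ) * f t)
    (l : ℂ)
    (hev : ∃ X : C(Set.Icc (0:ℝ) 1, ℂ) →L[ℂ] C(Set.Icc (0:ℝ) 1, ℂ),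
      X ≠ 0 ∧ M ∘L X = l • (X ∘L M)) :
    l.im = 0 ∧ 0 < l.re := by
  obtain ⟨X, hX, hcomm⟩ := hev
  by_contra hcon
  push_neg at hcon
  -- find f with X f ≠ 0
  obtain ⟨f, hf⟩ : ∃ f, X f ≠ 0 := by
    by_contra h
    push_neg at h
    exact hX (ContinuousLinearMap.ext fun f => h f)
  -- find t0 with (t0 : ℝ) > 0 and X f t0 ≠ 0
  obtain ⟨t0, ht0pos, ht0⟩ : ∃ t0 : Set.Icc (0:ℝ) 1, 0 < (t0:ℝ) ∧ X f t0 ≠ 0 := by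
    obtain ⟨t, ht⟩ : ∃ t, X f t ≠ 0 := by
      by_contra h
      push_neg at h
      exact hf (ContinuousMap.ext h)
    rcases lt_or_eq_of_le t.2.1 with hpos | h0
    · exact ⟨t, hpos, ht⟩
    · -- t = 0 : use the sequence 1/(n+1) → 0
      have hmem : ∀ n : ℕ, (1 / ((n:ℝ) + 1)) ∈ Set.Icc (0:ℝ) 1 := by
        intro n
        constructor
        · positivity
        · rw [div_le_one (by positivity)]
          linarith [Nat.cast_nonneg (α := ℝ) n]
      set u : ℕ → Set.Icc (0:ℝ) 1 := fun n => ⟨1 / ((n:ℝ) + 1), hmem n⟩ with hu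
      have htu : Tendsto u atTop (𝓝 t) := by
        rw [tendsto_subtype_rng]
        have : Tendsto (fun n : ℕ => 1 / ((n:ℝ) + 1)) atTop (𝓝 0) :=
          tendsto_one_div_add_atTop_nhds_zero_nat
        simpa [hu, ← h0] using this
      have hXcont : Tendsto (fun n => X f (u n)) atTop (𝓝 (X f t)) :=
        ((X f).continuous.continuousAt.tendsto).comp htu
      have hevn : ∀ᶠ n in atTop, X f (u n) ≠ 0 :=
        hXcont (isOpen_compl_singleton.mem_nhds ht)
      obtain ⟨n, hn⟩ := hevn.exists
      exact ⟨u n, by positivity, hn⟩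
  -- choose c with (c * l).re ≤ 0 and (c * x).re = x for real x
  set b : ℝ := if l.im = 0 then 0 else l.re / l.im with hb
  set c : ℂ := 1 + b * Complex.I with hc
  have hclre : (c * l).re ≤ 0 := by
    rcases eq_or_ne l.im 0 with him | him
    · simpa [hc, hb, him, Complex.mul_re, Complex.add_re, Complex.add_im] using hcon him
    · have : (c * l).re = l.re - (l.re / l.im) * l.im := by
        simp [hc, hb, him, Complex.mul_re, Complex.add_re, Complex.add_im]
      rw [this]
      field_simp
      simp
  have hcx : ∀ x : ℝ, (c * (x:ℂ)).re = x := by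
    intro x
    simp [hc, Complex.mul_re, Complex.add_re, Complex.add_im]
  -- the key constants
  set w : ℂ := c * l with hw
  set R : ℝ := ‖w‖ with hR
  set γ : ℝ := R ^ 2 / (2 * (t0:ℝ)) + 1 with hγ
  have hγpos : 0 < γ := by positivity
  set s : ℝ := Real.sqrt (γ ^ 2 + R ^ 2) with hs
  set r : ℝ := γ + (t0:ℝ) with hr
  have hspos : 0 < s := Real.sqrt_pos.mpr (by positivity)
  have hRsq : R ^ 2 = w.re ^ 2 + w.im ^ 2 := by
    rw [hR, Complex.sq_norm, Complex.normSq_apply]; ring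
  have hsr : s < r := by
    rw [hs, hr]
    rw [Real.sqrt_lt' (by linarith)]
    have h2 : 2 * γ * (t0:ℝ) = R ^ 2 + 2 * (t0:ℝ) := by
      rw [hγ]; field_simp
    nlinarith
  have hub : ∀ t : ℝ, 0 ≤ t → t ≤ 1 → ‖(γ:ℂ) + w * (t:ℂ)‖ ≤ s := by
    intro t h0 h1
    rw [hs, Complex.norm_def]
    apply Real.sqrt_le_sqrt
    rw [Complex.normSq_apply]
    simp only [Complex.add_re, Complex.add_im, Complex.mul_re, Complex.mul_im,
      Complex.ofReal_re, Complex.ofReal_im]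
    have htt : t * t ≤ 1 := mul_le_one₀ h1 h0 h1
    nlinarith [mul_nonneg (mul_nonneg hγpos.le (neg_nonneg.mpr hclre)) h0,
      mul_nonneg (sub_nonneg.mpr htt) (add_nonneg (sq_nonneg w.re) (sq_nonneg w.im))]
  have hlb : r ≤ ‖(γ:ℂ) + c * ((t0:ℝ):ℂ)‖ := by
    have : ((γ:ℂ) + c * ((t0:ℝ):ℂ)).re = r := by
      simp [hr, hcx (t0:ℝ)]
    rw [← this]
    exact Complex.re_le_norm _
  -- the operators A and B with A * X = X * B
  have hMX : ∀ g : C(Set.Icc (0:ℝ) 1, ℂ), M (X g) = l • (X (M g)) := by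
    intro g
    have := ContinuousLinearMap.ext_iff.mp hcomm g
    simpa using this
  set A : C(Set.Icc (0:ℝ) 1, ℂ) →L[ℂ] C(Set.Icc (0:ℝ) 1, ℂ) :=
    (γ:ℂ) • (1 : C(Set.Icc (0:ℝ) 1, ℂ) →L[ℂ] C(Set.Icc (0:ℝ) 1, ℂ)) + c • M with hA
  set B : C(Set.Icc (0:ℝ) 1, ℂ) →L[ℂ] C(Set.Icc (0:ℝ) 1, ℂ) :=
    (γ:ℂ) • (1 : C(Set.Icc (0:ℝ) 1, ℂ) →L[ℂ] C(Set.Icc (0:ℝ) 1, ℂ)) + (c * l) • M with hB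
  have hAX : A * X = X * B := by
    refine ContinuousLinearMap.ext fun g => ?_
    show A (X g) = X (B g)
    simp [hA, hB, hMX g, map_add, map_smul, smul_smul]
  have hpow : ∀ n : ℕ, A ^ n * X = X * B ^ n := by
    intro n
    induction n with
    | zero => simp
    | succ n ih => rw [pow_succ, pow_succ, mul_assoc, hAX, ← mul_assoc, ih, mul_assoc]
  have hAval : ∀ (h : C(Set.Icc (0:ℝ) 1, ℂ)) (t : Set.Icc (0:ℝ) 1),
      A h t = ((γ:ℂ) + c * ((t:ℝ):ℂ)) * h t := by
    intro h t
    simp [hA, hM h t]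
    ring
  have hApow : ∀ (n : ℕ) (h : C(Set.Icc (0:ℝ) 1, ℂ)) (t : Set.Icc (0:ℝ) 1),
      (A ^ n) h t = ((γ:ℂ) + c * ((t:ℝ):ℂ)) ^ n * h t := by
    intro n
    induction n with
    | zero => intro h t; simp
    | succ n ih =>
      intro h t
      rw [pow_succ, ContinuousLinearMap.mul_apply, ih, hAval, pow_succ]
      ring
  have hBval : ∀ (h : C(Set.Icc (0:ℝ) 1, ℂ)) (t : Set.Icc (0:ℝ) 1),
      B h t = ((γ:ℂ) + w * ((t:ℝ):ℂ)) * h t := by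
    intro h t
    simp [hB, hw, hM h t]
    ring
  have hBpow : ∀ (n : ℕ) (h : C(Set.Icc (0:ℝ) 1, ℂ)) (t : Set.Icc (0:ℝ) 1),
      (B ^ n) h t = ((γ:ℂ) + w * ((t:ℝ):ℂ)) ^ n * h t := by
    intro n
    induction n with
    | zero => intro h t; simp
    | succ n ih =>
      intro h t
      rw [pow_succ, ContinuousLinearMap.mul_apply, ih, hBval, pow_succ]
      ring
  -- norm bound for B ^ n
  have hBnorm : ∀ n : ℕ, ‖(B ^ n) f‖ ≤ s ^ n * ‖f‖ := by
    intro n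
    refine (ContinuousMap.norm_le _ (by positivity)).mpr fun t => ?_
    rw [hBpow n f t]
    rw [norm_mul, norm_pow]
    have h1 : ‖(γ:ℂ) + w * ((t:ℝ):ℂ)‖ ≤ s := hub (t:ℝ) t.2.1 t.2.2
    exact mul_le_mul (pow_le_pow_left₀ (norm_nonneg _) h1 n)
      (f.norm_coe_le_norm t) (norm_nonneg _) (by positivity)
  -- the key inequality
  have key : ∀ n : ℕ, r ^ n * ‖X f t0‖ ≤ (‖X‖ * ‖f‖) * s ^ n := by
    intro n
    have e1 : (A ^ n) (X f) = X ((B ^ n) f) := by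
      have := ContinuousLinearMap.ext_iff.mp (hpow n) f
      simpa using this
    have e2 : ‖(A ^ n) (X f) t0‖ = ‖(γ:ℂ) + c * ((t0:ℝ):ℂ)‖ ^ n * ‖X f t0‖ := by
      rw [hApow n (X f) t0, norm_mul, norm_pow]
    have e3 : r ^ n * ‖X f t0‖ ≤ ‖(A ^ n) (X f) t0‖ := by
      rw [e2]
      exact mul_le_mul_of_nonneg_right (pow_le_pow_left₀ (by positivity) hlb n) (norm_nonneg _)
    have e4 : ‖(A ^ n) (X f) t0‖ ≤ ‖X‖ * (s ^ n * ‖f‖) := by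
      rw [e1]
      calc ‖X ((B ^ n) f) t0‖ ≤ ‖X ((B ^ n) f)‖ := ContinuousMap.norm_coe_le_norm _ _
        _ ≤ ‖X‖ * ‖(B ^ n) f‖ := X.le_opNorm _
        _ ≤ ‖X‖ * (s ^ n * ‖f‖) := by
            exact mul_le_mul_of_nonneg_left (hBnorm n) (by positivity)
    calc r ^ n * ‖X f t0‖ ≤ ‖X‖ * (s ^ n * ‖f‖) := e3.trans e4
      _ = (‖X‖ * ‖f‖) * s ^ n := by ring
  -- contradiction : (r/s)^n is unbounded
  have hgt0 : 0 < ‖X f t0‖ := norm_pos_iff.mpr ht0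
  have hone : 1 < r / s := (one_lt_div hspos).mpr hsr
  obtain ⟨n, hn⟩ := pow_unbounded_of_one_lt ((‖X‖ * ‖f‖) / ‖X f t0‖) hone
  rw [div_pow] at hn
  rw [div_lt_div_iff₀ hgt0 (by positivity)] at hn
  have := key n
  nlinarith
end

section
/- Let M_t be the position operator on C[0,1] defined by (M_t f)(t) = t f(t), and let λ be a real number with λ > 0. Then λ is an extended eigenvalue of M_t, and a bounded operator X on C[0,1] satisfies M_t X = λ X M_t and X ≠ 0 if and only if there exists a nonzero function φ ∈ C[0,1] with φ(t) = 0 for all t ∈ [0,1] with t > λ, such that for every f ∈ C[0,1]: (X f)(t) = φ(t) f(t/λ) for t ∈ [0,1] with t ≤ λ, and (X f)(t) = 0 for t ∈ [0,1] with t > λ. -/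
open Filter Topology

set_option maxHeartbeats 1000000

noncomputable def posQ (l : ℝ) (hl : 0 < l) : C(Set.Icc (0:ℝ) 1, Set.Icc (0:ℝ) 1) :=
  ⟨fun t => ⟨min ((t:ℝ)/l) 1, ⟨le_min (div_nonneg t.2.1 hl.le) zero_le_one, min_le_right _ _⟩⟩,
    Continuous.subtype_mk ((continuous_subtype_val.div_const l).min continuous_const) _⟩

noncomputable def posPhi (l : ℝ) : C(Set.Icc (0:ℝ) 1, ℂ) :=
  ⟨fun t => ((max (min l 1 - (t:ℝ)) 0 : ℝ) : ℂ),
    Complex.continuous_ofReal.comp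
      (((continuous_const.sub continuous_subtype_val).max continuous_const))⟩

noncomputable def posX (l : ℝ) (hl : 0 < l) :
    C(Set.Icc (0:ℝ) 1, ℂ) →L[ℂ] C(Set.Icc (0:ℝ) 1, ℂ) :=
  LinearMap.mkContinuous
    { toFun := fun f => posPhi l * f.comp (posQ l hl)
      map_add' := by intro f g; ext s; simp [mul_add]
      map_smul' := by intro c f; ext s; simp; ring }
    ‖posPhi l‖
    (fun f => by
      refine (norm_mul_le _ _).trans ?_
      refine mul_le_mul_of_nonneg_left ?_ (norm_nonneg _)
      exact (ContinuousMap.norm_le _ (norm_nonneg f)).mpr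
        fun s => ContinuousMap.norm_coe_le_norm f _)

/-- For the position operator `(M f)(t) = t f(t)` on `C[0,1]` and a real `λ > 0`: `λ` is an
extended eigenvalue of `M`, and a bounded operator `X ≠ 0` satisfies `M X = λ X M` iff
there is a nonzero `φ ∈ C[0,1]` vanishing on `(λ, 1]` with `(X f)(t) = φ(t) f(t/λ)` for
`t ≤ λ` and `(X f)(t) = 0` for `t > λ`. -/
theorem position_operator_extended_eigenoperators
    (M : C(Set.Icc (0:ℝ) 1, ℂ) →L[ℂ] C(Set.Icc (0:ℝ) 1, ℂ))
    (hM : ∀ (f : C(Set.Icc (0:ℝ) 1, ℂ)) (t : Set.Icc (0:ℝ) 1),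
      M f t = ((t : ℝ) : ℂ) * f t)
    (l : ℝ) (hl : 0 < l) :
    (∃ X : C(Set.Icc (0:ℝ) 1, ℂ) →L[ℂ] C(Set.Icc (0:ℝ) 1, ℂ),
      X ≠ 0 ∧ M ∘L X = (l : ℂ) • (X ∘L M)) ∧
    ∀ X : C(Set.Icc (0:ℝ) 1, ℂ) →L[ℂ] C(Set.Icc (0:ℝ) 1, ℂ),
      (M ∘L X = (l : ℂ) • (X ∘L M) ∧ X ≠ 0) ↔
      ∃ φ : C(Set.Icc (0:ℝ) 1, ℂ), φ ≠ 0 ∧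
        (∀ t : Set.Icc (0:ℝ) 1, l < (t : ℝ) → φ t = 0) ∧
        ∀ (f : C(Set.Icc (0:ℝ) 1, ℂ)) (t : Set.Icc (0:ℝ) 1),
          (∀ h : (t : ℝ) ≤ l, X f t = φ t *
            f ⟨(t : ℝ) / l, ⟨div_nonneg t.2.1 hl.le, (div_le_one hl).mpr h⟩⟩) ∧
          (l < (t : ℝ) → X f t = 0) := by
  have hl0 : (l:ℂ) ≠ 0 := Complex.ofReal_ne_zero.mpr hl.ne'
  -- backward direction
  have bwd : ∀ X : C(Set.Icc (0:ℝ) 1, ℂ) →L[ℂ] C(Set.Icc (0:ℝ) 1, ℂ),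
      (∃ φ : C(Set.Icc (0:ℝ) 1, ℂ), φ ≠ 0 ∧
        (∀ t : Set.Icc (0:ℝ) 1, l < (t : ℝ) → φ t = 0) ∧
        ∀ (f : C(Set.Icc (0:ℝ) 1, ℂ)) (t : Set.Icc (0:ℝ) 1),
          (∀ h : (t : ℝ) ≤ l, X f t = φ t *
            f ⟨(t : ℝ) / l, ⟨div_nonneg t.2.1 hl.le, (div_le_one hl).mpr h⟩⟩) ∧
          (l < (t : ℝ) → X f t = 0)) →
      (M ∘L X = (l : ℂ) • (X ∘L M) ∧ X ≠ 0) := by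
    rintro X ⟨φ, hφ0, hφv, hform⟩
    constructor
    · ext f t
      rcases le_or_gt ((t:ℝ)) l with h | h
      · have h1 := (hform f t).1 h
        have h2 := (hform (M f) t).1 h
        simp only [ContinuousLinearMap.comp_apply, ContinuousLinearMap.smul_apply,
          ContinuousMap.smul_apply, smul_eq_mul, hM, h1, h2]
        push_cast
        field_simp
      · have h1 := (hform f t).2 h
        have h2 := (hform (M f) t).2 h
        simp only [ContinuousLinearMap.comp_apply, ContinuousLinearMap.smul_apply,
          ContinuousMap.smul_apply, smul_eq_mul, hM, h1, h2]
        ring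
    · obtain ⟨t, ht⟩ : ∃ t, φ t ≠ 0 := by
        by_contra h
        push_neg at h
        exact hφ0 (ContinuousMap.ext fun t => by simpa using h t)
      have htl : (t:ℝ) ≤ l := le_of_not_gt fun h => ht (hφv t h)
      intro hX
      apply ht
      have := (hform 1 t).1 htl
      rw [hX] at this
      simpa using this.symm
  -- forward direction
  have fwd : ∀ X : C(Set.Icc (0:ℝ) 1, ℂ) →L[ℂ] C(Set.Icc (0:ℝ) 1, ℂ),
      M ∘L X = (l : ℂ) • (X ∘L M) → X ≠ 0 →
      ∃ φ : C(Set.Icc (0:ℝ) 1, ℂ), φ ≠ 0 ∧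
        (∀ t : Set.Icc (0:ℝ) 1, l < (t : ℝ) → φ t = 0) ∧
        ∀ (f : C(Set.Icc (0:ℝ) 1, ℂ)) (t : Set.Icc (0:ℝ) 1),
          (∀ h : (t : ℝ) ≤ l, X f t = φ t *
            f ⟨(t : ℝ) / l, ⟨div_nonneg t.2.1 hl.le, (div_le_one hl).mpr h⟩⟩) ∧
          (l < (t : ℝ) → X f t = 0) := by
    intro X hcomm hX0
    set e : C(Set.Icc (0:ℝ) 1, ℂ) :=
      ⟨fun s => ((s : ℝ) : ℂ), Complex.continuous_ofReal.comp continuous_subtype_val⟩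
      with he
    have hMe : ∀ g : C(Set.Icc (0:ℝ) 1, ℂ), M g = e * g := by
      intro g; ext s; simp [hM, he]
    have h1 : ∀ (f : C(Set.Icc (0:ℝ) 1, ℂ)) (t : Set.Icc (0:ℝ) 1),
        ((t:ℝ):ℂ) * X f t = (l:ℂ) * X (M f) t := by
      intro f t
      have h := congrArg (fun T : C(Set.Icc (0:ℝ) 1, ℂ) →L[ℂ] C(Set.Icc (0:ℝ) 1, ℂ) =>
        (T f) t) hcomm
      simpa [hM, smul_eq_mul] using h
    have key : ∀ (f : C(Set.Icc (0:ℝ) 1, ℂ)) (t : Set.Icc (0:ℝ) 1),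
        X (e * f) t = (((t:ℝ):ℂ)/l) * X f t := by
      intro f t
      rw [← hMe, div_mul_eq_mul_div, eq_div_iff hl0, mul_comm _ ((l:ℂ))]
      exact (h1 f t).symm
    have keyn : ∀ (n : ℕ) (f : C(Set.Icc (0:ℝ) 1, ℂ)) (t : Set.Icc (0:ℝ) 1),
        X (e^n * f) t = (((t:ℝ):ℂ)/l)^n * X f t := by
      intro n
      induction n with
      | zero => simp
      | succ n ih =>
        intro f t
        have hrw : e^(n+1) * f = e^n * (e * f) := by ring
        rw [hrw, ih, key, pow_succ]
        ring
    -- vanishing above l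
    have hz : ∀ (f : C(Set.Icc (0:ℝ) 1, ℂ)) (t : Set.Icc (0:ℝ) 1),
        l < (t:ℝ) → X f t = 0 := by
      intro f t ht
      by_contra hne
      have hpos : 0 < ‖X f t‖ := norm_pos_iff.mpr hne
      have h1lt : 1 < (t:ℝ)/l := (one_lt_div hl).mpr ht
      have hbound : ∀ n : ℕ, ((t:ℝ)/l)^n * ‖X f t‖ ≤ ‖X‖ * ‖f‖ := by
        intro n
        have he1 : ‖e^n * f‖ ≤ ‖f‖ := by
          refine (ContinuousMap.norm_le _ (norm_nonneg f)).mpr fun s => ?_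
          have : ‖(e^n * f) s‖ = ‖(e:C(_,ℂ)) s‖^n * ‖f s‖ := by
            simp [norm_pow]
          rw [this]
          have hes : ‖(e:C(_,ℂ)) s‖ ≤ 1 := by
            simp only [he, ContinuousMap.coe_mk, Complex.norm_real]
            rw [Real.norm_eq_abs, abs_of_nonneg s.2.1]
            exact s.2.2
          calc ‖(e:C(_,ℂ)) s‖^n * ‖f s‖ ≤ 1^n * ‖f‖ := by
                exact mul_le_mul (pow_le_pow_left₀ (norm_nonneg _) hes n)
                  (ContinuousMap.norm_coe_le_norm f s) (norm_nonneg _) (by positivity)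
            _ = ‖f‖ := by ring
        have h2 : ‖X (e^n * f) t‖ ≤ ‖X‖ * ‖f‖ :=
          (ContinuousMap.norm_coe_le_norm _ t).trans
            ((X.le_opNorm _).trans (mul_le_mul_of_nonneg_left he1 (norm_nonneg X)))
        calc ((t:ℝ)/l)^n * ‖X f t‖ = ‖X (e^n * f) t‖ := by
              rw [keyn]
              rw [norm_mul, norm_pow]
              congr 2
              rw [← Complex.ofReal_div, Complex.norm_real, Real.norm_eq_abs,
                abs_of_nonneg (by positivity)]
          _ ≤ ‖X‖ * ‖f‖ := h2
      obtain ⟨n, hn⟩ := pow_unbounded_of_one_lt ((‖X‖ * ‖f‖)/‖X f t‖) h1lt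
      exact absurd (hbound n) (not_le.mpr ((div_lt_iff₀ hpos).mp hn))
    -- the main formula for t ≤ l
    have hform : ∀ (t : Set.Icc (0:ℝ) 1) (ht : (t:ℝ) ≤ l) (f : C(Set.Icc (0:ℝ) 1, ℂ)),
        X f t = X 1 t * f ⟨(t:ℝ)/l, ⟨div_nonneg t.2.1 hl.le, (div_le_one hl).mpr ht⟩⟩ := by
      intro t ht f
      set tl : Set.Icc (0:ℝ) 1 :=
        ⟨(t:ℝ)/l, ⟨div_nonneg t.2.1 hl.le, (div_le_one hl).mpr ht⟩⟩ with htl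
      have hadj : ∀ g ∈ StarAlgebra.adjoin ℂ {e}, ∀ f' : C(Set.Icc (0:ℝ) 1, ℂ),
          X (g * f') t = g tl * X f' t ∧
          X (star g * f') t = (star g) tl * X f' t := by
        intro g hg
        induction hg using StarAlgebra.adjoin_induction with
        | mem x hx =>
          rw [Set.mem_singleton_iff] at hx
          subst hx
          have hstar : star e = e := ContinuousMap.ext fun s => by
            simp [he, Complex.conj_ofReal]
          intro f'
          rw [hstar]
          have hetl : (e : C(_,ℂ)) tl = ((t:ℝ):ℂ)/l := by
            simp [he, htl, Complex.ofReal_div]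
          exact ⟨by rw [key, hetl], by rw [key, hetl]⟩
        | algebraMap r =>
          intro f'
          have hmul : ∀ c : ℂ, (algebraMap ℂ C(Set.Icc (0:ℝ) 1, ℂ) c) * f' = c • f' := by
            intro c; ext s; simp [Algebra.algebraMap_eq_smul_one]
          have hst : star (algebraMap ℂ C(Set.Icc (0:ℝ) 1, ℂ) r)
              = algebraMap ℂ C(Set.Icc (0:ℝ) 1, ℂ) (star r) := by
            ext s; simp [Algebra.algebraMap_eq_smul_one]
          constructor
          · rw [hmul r, map_smul]
            simp [Algebra.algebraMap_eq_smul_one]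
          · rw [hst, hmul (star r), map_smul]
            simp [Algebra.algebraMap_eq_smul_one]
        | add x y hx hy ihx ihy =>
          intro f'
          have h1 : (x + y) * f' = x * f' + y * f' := by ring
          have h2 : star (x + y) * f' = star x * f' + star y * f' := by
            rw [star_add]; ring
          constructor
          · rw [h1, map_add]
            simp only [ContinuousMap.add_apply]
            rw [(ihx f').1, (ihy f').1]
            ring
          · rw [h2, map_add]
            simp only [ContinuousMap.add_apply, star_add]
            rw [(ihx f').2, (ihy f').2]
            ring
        | mul x y hx hy ihx ihy =>
          intro f'
          constructor
          · have h1 : (x * y) * f' = x * (y * f') := by ring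
            rw [h1, (ihx (y * f')).1, (ihy f').1]
            simp only [ContinuousMap.mul_apply]
            ring
          · have h1 : star (x * y) * f' = star y * (star x * f') := by
              rw [star_mul]; ring
            rw [h1, (ihy (star x * f')).2, (ihx f').2]
            simp only [ContinuousMap.mul_apply, star_mul]
            ring
        | star x hx ihx =>
          intro f'
          refine ⟨(ihx f').2, ?_⟩
          rw [star_star]
          exact (ihx f').1
      have hsep : (StarAlgebra.adjoin ℂ ({e} : Set C(Set.Icc (0:ℝ) 1, ℂ))).SeparatesPoints := by
        intro x y hxy
        refine ⟨_, ⟨e, StarAlgebra.subset_adjoin ℂ {e} rfl, rfl⟩, ?_⟩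
        simp only [he, ContinuousMap.coe_mk]
        exact fun h => hxy (Subtype.ext (by exact_mod_cast h))
      have htop := ContinuousMap.starSubalgebra_topologicalClosure_eq_top_of_separatesPoints
        (StarAlgebra.adjoin ℂ ({e} : Set C(Set.Icc (0:ℝ) 1, ℂ))) hsep
      have hfmem : f ∈ closure ((StarAlgebra.adjoin ℂ ({e} : Set C(Set.Icc (0:ℝ) 1, ℂ))) :
          Set C(Set.Icc (0:ℝ) 1, ℂ)) := by
        rw [← StarSubalgebra.topologicalClosure_coe, htop]
        trivial
      have hclosed : IsClosed {g : C(Set.Icc (0:ℝ) 1, ℂ) | X g t = X 1 t * g tl} := by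
        have hc1 : Continuous fun g : C(Set.Icc (0:ℝ) 1, ℂ) => X g t :=
          (continuous_eval_const t).comp X.continuous
        have hc2 : Continuous fun g : C(Set.Icc (0:ℝ) 1, ℂ) => X 1 t * g tl :=
          continuous_const.mul (continuous_eval_const tl)
        exact isClosed_eq hc1 hc2
      have hsub : ((StarAlgebra.adjoin ℂ ({e} : Set C(Set.Icc (0:ℝ) 1, ℂ))) :
          Set C(Set.Icc (0:ℝ) 1, ℂ)) ⊆ {g | X g t = X 1 t * g tl} := by
        intro g hg
        have := (hadj g hg 1).1
        rw [mul_one] at this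
        rw [Set.mem_setOf_eq, this]
        ring
      exact closure_minimal hsub hclosed hfmem
    refine ⟨X 1, ?_, fun t ht => hz 1 t ht, fun f t => ⟨fun h => hform t h f, hz f t⟩⟩
    intro h
    apply hX0
    ext f s
    rcases le_or_gt ((s:ℝ)) l with h' | h'
    · rw [hform s h' f, h]
      simp
    · simpa using hz f s h'
  -- construction of X₀
  have hX₀ : ∃ φ : C(Set.Icc (0:ℝ) 1, ℂ), φ ≠ 0 ∧
      (∀ t : Set.Icc (0:ℝ) 1, l < (t : ℝ) → φ t = 0) ∧
      ∀ (f : C(Set.Icc (0:ℝ) 1, ℂ)) (t : Set.Icc (0:ℝ) 1),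
        (∀ h : (t : ℝ) ≤ l, posX l hl f t = φ t *
          f ⟨(t : ℝ) / l, ⟨div_nonneg t.2.1 hl.le, (div_le_one hl).mpr h⟩⟩) ∧
        (l < (t : ℝ) → posX l hl f t = 0) := by
    have hφval : ∀ t : Set.Icc (0:ℝ) 1, posPhi l t = ((max (min l 1 - (t:ℝ)) 0 : ℝ) : ℂ) :=
      fun _ => rfl
    have hφz : ∀ t : Set.Icc (0:ℝ) 1, l < (t:ℝ) → posPhi l t = 0 := by
      intro t ht
      rw [hφval]
      have : min l 1 - (t:ℝ) ≤ 0 := by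
        have := min_le_left l 1
        linarith
      rw [max_eq_right this]
      simp
    refine ⟨posPhi l, ?_, hφz, ?_⟩
    · intro h
      have h2 := ContinuousMap.congr_fun h ⟨0, le_refl 0, zero_le_one⟩
      have h3 : ((max (min l 1 - (0:ℝ)) 0 : ℝ) : ℂ) = 0 := by simpa [posPhi] using h2
      rw [sub_zero, max_eq_left (le_min hl.le zero_le_one), Complex.ofReal_eq_zero] at h3
      have hpos : 0 < min l 1 := lt_min hl one_pos
      rw [h3] at hpos
      exact lt_irrefl 0 hpos
    · intro f t
      constructor
      · intro h
        have : posX l hl f t = posPhi l t * f (posQ l hl t) := rfl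
        rw [this]
        congr 2
        apply Subtype.ext
        show min ((t:ℝ)/l) 1 = (t:ℝ)/l
        exact min_eq_left ((div_le_one hl).mpr h)
      · intro h
        have : posX l hl f t = posPhi l t * f (posQ l hl t) := rfl
        rw [this, hφz t h, zero_mul]
  refine ⟨⟨posX l hl, (bwd _ hX₀).2, (bwd _ hX₀).1⟩,
    fun X => ⟨fun h => fwd X h.1 h.2, fun h => bwd X h⟩⟩
end

section
/- Let M_t be the position operator on C[0,1] defined by (M_t f)(t) = t f(t), let λ be a real number with λ > 0, and let 𝒳 = {X ∈ B(C[0,1]) : M_t X = λ X M_t} be the subspace of all extended eigenoperators of M_t associated with λ (together with 0). Then 𝒳 is a localizing subspace of B(C[0,1]) and 𝒳 contains no nonzero compact operator. -/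
open Filter Topology

noncomputable section PosOpAux

abbrev PosOpI := Set.Icc (0:ℝ) 1
abbrev PosOpE := C(PosOpI, ℂ)

noncomputable def mulComp (u : PosOpE) (σ : C(PosOpI, PosOpI)) : PosOpE →L[ℂ] PosOpE :=
  LinearMap.mkContinuous
    { toFun := fun f => u * f.comp σ
      map_add' := by intro f g; ext t; simp [mul_add]
      map_smul' := by intro c f; ext t; simp; ring }
    ‖u‖ (fun f => by
      calc ‖u * f.comp σ‖ ≤ ‖u‖ * ‖f.comp σ‖ := norm_mul_le _ _
        _ ≤ ‖u‖ * ‖f‖ := by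
            apply mul_le_mul_of_nonneg_left _ (norm_nonneg u)
            apply ContinuousMap.norm_le _ (norm_nonneg f) |>.2
            intro t
            exact f.norm_coe_le_norm (σ t))

@[simp] lemma mulComp_apply (u : PosOpE) (σ : C(PosOpI, PosOpI)) (f : PosOpE) (t : PosOpI) :
    mulComp u σ f t = u t * f (σ t) := rfl

lemma mulComp_norm_le (u : PosOpE) (σ : C(PosOpI, PosOpI)) : ‖mulComp u σ‖ ≤ ‖u‖ :=
  LinearMap.mkContinuous_norm_le _ (norm_nonneg u) _

end PosOpAux

section main
variable (M : PosOpE →L[ℂ] PosOpE)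
    (hM : ∀ (f : PosOpE) (t : PosOpI), M f t = ((t : ℝ) : ℂ) * f t)
    (l : ℝ) (hl : 0 < l)

open Metric in
include hM hl in
theorem partA : ∃ (c : PosOpE) (r : ℝ), 0 < r ∧ (0 : PosOpE) ∉ Metric.closedBall c r ∧
    ∀ x : ℕ → PosOpE, (∀ n, x n ∈ Metric.closedBall c r) →
      ∃ (n : ℕ → ℕ) (X : ℕ → PosOpE →L[ℂ] PosOpE) (y : PosOpE), StrictMono n ∧
        (∀ j, M ∘L X j = (l : ℂ) • (X j ∘L M)) ∧ (∀ j, ‖X j‖ ≤ 1) ∧ y ≠ 0 ∧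
        Tendsto (fun j => X j (x (n j))) atTop (𝓝 y) := by
  set c₀ : ℝ := min l 1 with hc₀def
  have hc₀ : 0 < c₀ := lt_min hl one_pos
  have hσcont : Continuous fun t : PosOpI => (⟨min ((t:ℝ)/l) 1,
      ⟨le_min (div_nonneg t.2.1 hl.le) zero_le_one, min_le_right _ _⟩⟩ : PosOpI) :=
    Continuous.subtype_mk ((continuous_subtype_val.div_const l).min continuous_const) _
  set σ : C(PosOpI, PosOpI) := ⟨_, hσcont⟩ with hσdef
  have hσ : ∀ t : PosOpI, (σ t : ℝ) = min ((t:ℝ)/l) 1 := fun t => rfl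
  have hwcont : Continuous fun t : PosOpI => (((max 0 (1 - (t:ℝ)/c₀))/2 : ℝ) : ℂ) := by
    apply Complex.continuous_ofReal.comp
    exact (continuous_const.max (continuous_const.sub (continuous_subtype_val.div_const c₀))).div_const 2
  set w : PosOpE := ⟨_, hwcont⟩ with hwdef
  have hwval : ∀ t : PosOpI, w t = (((max 0 (1 - (t:ℝ)/c₀))/2 : ℝ) : ℂ) := fun t => rfl
  have hw0 : ∀ t : PosOpI, c₀ ≤ (t:ℝ) → w t = 0 := by
    intro t ht
    rw [hwval]
    have : max 0 (1 - (t:ℝ)/c₀) = 0 := max_eq_left (by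
      have : (1:ℝ) ≤ (t:ℝ)/c₀ := (one_le_div hc₀).2 ht
      linarith)
    rw [this]; norm_num
  have hwnorm : ∀ t : PosOpI, ‖w t‖ ≤ 1/2 := by
    intro t
    rw [hwval, Complex.norm_real]
    have h1 : max 0 (1 - (t:ℝ)/c₀) ≤ 1 := by
      apply max_le (by norm_num)
      have : 0 ≤ (t:ℝ)/c₀ := div_nonneg t.2.1 hc₀.le
      linarith
    have h0 : 0 ≤ max 0 (1 - (t:ℝ)/c₀) := le_max_left _ _
    rw [Real.norm_eq_abs, abs_of_nonneg (by positivity)]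
    linarith
  refine ⟨1, 1/2, by norm_num, ?_, ?_⟩
  · simp only [Metric.mem_closedBall, dist_zero_left]
    rw [norm_one]; norm_num
  intro x hx
  have hxlb : ∀ n (s : PosOpI), (1:ℝ)/2 ≤ ‖x n s‖ := by
    intro n s
    have h1 : ‖x n s - 1‖ ≤ 1/2 := by
      have := hx n
      rw [Metric.mem_closedBall, dist_eq_norm] at this
      calc ‖x n s - 1‖ = ‖(x n - 1) s‖ := by simp
        _ ≤ ‖x n - 1‖ := ContinuousMap.norm_coe_le_norm _ s
        _ ≤ 1/2 := this
    have h2 : (1:ℝ) = ‖x n s - (x n s - 1)‖ := by norm_num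
    have h3 := norm_sub_le (x n s) (x n s - 1)
    rw [← h2] at h3
    linarith
  have hxne : ∀ n (s : PosOpI), x n s ≠ 0 := by
    intro n s h
    have := hxlb n s
    rw [h, norm_zero] at this; linarith
  have hucont : ∀ j, Continuous fun t : PosOpI => w t / x j (σ t) := by
    intro j
    exact w.continuous.div (((x j).comp σ).continuous) (fun t => hxne j (σ t))
  set u : ℕ → PosOpE := fun j => ⟨_, hucont j⟩ with hudef
  have huval : ∀ j t, u j t = w t / x j (σ t) := fun j t => rfl
  refine ⟨id, fun j => mulComp (u j) σ, w, strictMono_id, ?_, ?_, ?_, ?_⟩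
  · -- membership
    intro j
    have hkey : ∀ t : PosOpI, ((t:ℝ):ℂ) * u j t = (l:ℂ) * (((σ t : ℝ):ℂ) * u j t) := by
      intro t
      rcases lt_or_ge (t:ℝ) c₀ with ht | ht
      · have hσt : (σ t : ℝ) = (t:ℝ)/l := by
          rw [hσ]
          exact min_eq_left ((div_le_one hl).2 (le_trans ht.le (min_le_left _ _)))
        rw [hσt]
        have hlne : (l:ℂ) ≠ 0 := by exact_mod_cast hl.ne'
        push_cast
        field_simp
      · have : u j t = 0 := by rw [huval, hw0 t ht, zero_div]
        rw [this]; ring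
    show M ∘L mulComp (u j) σ = (l : ℂ) • (mulComp (u j) σ ∘L M)
    apply ContinuousLinearMap.ext; intro f
    apply ContinuousMap.ext; intro t
    simp only [ContinuousLinearMap.comp_apply, ContinuousLinearMap.smul_apply,
      ContinuousMap.smul_apply, mulComp_apply, hM, smul_eq_mul]
    calc ((t:ℝ):ℂ) * (u j t * f (σ t)) = (((t:ℝ):ℂ) * u j t) * f (σ t) := by ring
      _ = ((l:ℂ) * (((σ t : ℝ):ℂ) * u j t)) * f (σ t) := by rw [hkey t]
      _ = (l:ℂ) * (u j t * (((σ t:ℝ):ℂ) * f (σ t))) := by ring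
  · -- norms
    intro j
    refine le_trans (mulComp_norm_le _ _) ?_
    apply ContinuousMap.norm_le _ zero_le_one |>.2
    intro t
    rw [huval, norm_div]
    apply div_le_one (lt_of_lt_of_le (by norm_num) (hxlb j (σ t))) |>.2
    exact le_trans (hwnorm t) (hxlb j (σ t))
  · -- w ≠ 0
    intro h
    have h2 : w ⟨0, by norm_num⟩ = 0 := by rw [h]; rfl
    rw [hwval] at h2
    norm_num [Complex.ofReal_eq_zero] at h2
  · -- convergence
    have : (fun j => mulComp (u j) σ (x (id j))) = fun _ => w := by
      funext j
      apply ContinuousMap.ext; intro t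
      simp only [id_eq, mulComp_apply, huval]
      exact div_mul_cancel₀ _ (hxne j (σ t))
    rw [this]
    exact tendsto_const_nhds


include hM hl in
set_option maxHeartbeats 1000000 in
theorem partB : ∀ X : PosOpE →L[ℂ] PosOpE,
    M ∘L X = (l : ℂ) • (X ∘L M) → IsCompactOperator X → X = 0 := by
  intro X h hc
  by_contra hX0
  have hlne : (l:ℂ) ≠ 0 := by exact_mod_cast hl.ne'
  obtain ⟨f₀, hf₀⟩ : ∃ f₀, X f₀ ≠ 0 := by
    by_contra hall; push_neg at hall
    exact hX0 (ContinuousLinearMap.ext fun f => by simp [hall f])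
  obtain ⟨t₀, ht₀⟩ : ∃ t₀, X f₀ t₀ ≠ 0 := by
    by_contra hall; push_neg at hall
    exact hf₀ (ContinuousMap.ext fun t => by simp [hall t])
  set s : ℝ := (t₀ : ℝ) with hsdef
  set R : ℝ := max 1 l with hRdef
  have hR1 : (1:ℝ) ≤ R := le_max_left _ _
  have hRl : l ≤ R := le_max_right _ _
  have hR0 : (0:ℝ) < R := lt_of_lt_of_le one_pos hR1
  have hRne : (R:ℂ) ≠ 0 := by exact_mod_cast hR0.ne'
  -- pointwise relation
  have hpt : ∀ (f : PosOpE) (t : PosOpI), ((t:ℝ):ℂ) * X f t = (l:ℂ) * X (M f) t := by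
    intro f t
    have h1 := DFunLike.congr_fun h f
    have h2 := DFunLike.congr_fun h1 t
    simpa [hM, ContinuousLinearMap.comp_apply, ContinuousLinearMap.smul_apply,
      ContinuousMap.smul_apply, smul_eq_mul] using h2
  have hXM : ∀ (f : PosOpE) (t : PosOpI), X (M f) t = (l:ℂ)⁻¹ * (((t:ℝ):ℂ) * X f t) := by
    intro f t
    rw [eq_inv_mul_iff_mul_eq₀ hlne]
    exact (hpt f t).symm
  -- the quadratic multiplier
  have hgqcont : Continuous fun v : PosOpI => ((1 - (l*(v:ℝ) - s)^2/R^2 : ℝ) : ℂ) := by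
    apply Complex.continuous_ofReal.comp
    fun_prop
  set gq : PosOpE := ⟨_, hgqcont⟩ with hgqdef
  have hgqval : ∀ v : PosOpI, gq v = ((1 - (l*(v:ℝ) - s)^2/R^2 : ℝ) : ℂ) := fun v => rfl
  set qr : PosOpI → ℝ := fun t => 1 - ((t:ℝ) - s)^2/R^2 with hqrdef
  have hqr0 : ∀ t : PosOpI, 0 ≤ qr t := by
    intro t
    have h1 : |(t:ℝ) - s| ≤ R := by
      rw [abs_le]
      constructor
      · have := t.2.1; have := t₀.2.2; simp only [hsdef]; nlinarith [hR1]
      · have := t.2.2; have := t₀.2.1; simp only [hsdef]; nlinarith [hR1]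
    have h2 : ((t:ℝ) - s)^2 ≤ R^2 := by nlinarith [abs_nonneg ((t:ℝ) - s), sq_abs ((t:ℝ) - s)]
    have := div_le_one_of_le₀ h2 (by positivity)
    simp only [hqrdef]
    linarith
  have hqr1 : ∀ t : PosOpI, qr t ≤ 1 := by
    intro t
    have : 0 ≤ ((t:ℝ) - s)^2/R^2 := by positivity
    simp only [hqrdef]; linarith
  have hgqnorm : ∀ v : PosOpI, ‖gq v‖ ≤ 1 := by
    intro v
    rw [hgqval, Complex.norm_real, Real.norm_eq_abs, abs_le]
    have h1 : |l*(v:ℝ) - s| ≤ R := by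
      rw [abs_le]
      constructor
      · have h2 := v.2.1; have := t₀.2.2
        simp only [hsdef]; nlinarith [hR1, mul_nonneg hl.le h2]
      · have h2 := v.2.2; have := t₀.2.1
        simp only [hsdef]
        nlinarith [hRl, mul_le_mul_of_nonneg_left h2 hl.le]
    have h2 : (l*(v:ℝ) - s)^2 ≤ R^2 := by
      nlinarith [abs_nonneg (l*(v:ℝ) - s), sq_abs (l*(v:ℝ) - s)]
    have h3 := div_le_one_of_le₀ h2 (by positivity : (0:ℝ) ≤ R^2)
    have h4 : 0 ≤ (l*(v:ℝ) - s)^2/R^2 := by positivity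
    constructor <;> linarith
  -- key multiplication identity
  have hL1 : ∀ (f : PosOpE) (t : PosOpI), X (gq * f) t = ((qr t : ℝ):ℂ) * X f t := by
    intro f t
    have hexp : gq * f = (((1 - s^2/R^2 : ℝ)):ℂ) • f + (((2*s*l/R^2 : ℝ)):ℂ) • M f
        + (((-(l^2)/R^2 : ℝ)):ℂ) • M (M f) := by
      ext v
      simp only [ContinuousMap.mul_apply, ContinuousMap.add_apply, ContinuousMap.smul_apply,
        smul_eq_mul, hM, hgqval]
      push_cast
      field_simp
      ring
    rw [hexp, map_add, map_add, map_smul, map_smul, map_smul]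
    simp only [ContinuousMap.add_apply, ContinuousMap.smul_apply, smul_eq_mul]
    rw [hXM (M f) t, hXM f t]
    simp only [hqrdef]
    push_cast
    field_simp [hlne, hRne]
    ring
  -- iterated
  have hL2 : ∀ (n : ℕ) (t : PosOpI), X (gq ^ n * f₀) t = ((qr t : ℝ):ℂ)^n * X f₀ t := by
    intro n
    induction n with
    | zero => intro t; simp
    | succ n ih =>
      intro t
      have hrw : gq ^ (n+1) * f₀ = gq * (gq ^ n * f₀) := by rw [pow_succ]; ring
      rw [hrw, hL1 (gq ^ n * f₀) t, ih t, pow_succ]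
      ring
  set fn : ℕ → PosOpE := fun n => gq ^ n * f₀ with hfndef
  have hfnnorm : ∀ n, ‖fn n‖ ≤ ‖f₀‖ := by
    intro n
    apply ContinuousMap.norm_le _ (norm_nonneg f₀) |>.2
    intro v
    have : fn n v = (gq v)^n * f₀ v := by
      simp [hfndef, ContinuousMap.mul_apply, ContinuousMap.pow_apply]
    rw [this, norm_mul, norm_pow]
    calc ‖gq v‖ ^ n * ‖f₀ v‖ ≤ 1 * ‖f₀ v‖ := by
          apply mul_le_mul_of_nonneg_right _ (norm_nonneg _)
          exact pow_le_one₀ (norm_nonneg _) (hgqnorm v)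
      _ ≤ ‖f₀‖ := by rw [one_mul]; exact f₀.norm_coe_le_norm v
  -- compactness
  obtain ⟨K, hK, hKsub⟩ :=
    IsCompactOperator.image_closedBall_subset_compact (f := X.toLinearMap) hc ‖f₀‖
  have hmem : ∀ n, X (fn n) ∈ K := by
    intro n
    exact hKsub ⟨fn n, mem_closedBall_zero_iff.2 (hfnnorm n), rfl⟩
  obtain ⟨y, -, φ, hφ, hconv⟩ := hK.tendsto_subseq hmem
  have hev : ∀ t : PosOpI, Tendsto (fun j => X (fn (φ j)) t) atTop (𝓝 (y t)) := by
    intro t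
    exact ((continuous_eval_const t).tendsto y).comp hconv
  have hyt0 : ∀ t : PosOpI, t ≠ t₀ → y t = 0 := by
    intro t ht
    have hlt : qr t < 1 := by
      have hne : (t:ℝ) - s ≠ 0 := by
        intro hz
        exact ht (Subtype.ext (by simp only [hsdef] at hz ⊢; linarith))
      have : 0 < ((t:ℝ) - s)^2/R^2 := by positivity
      simp only [hqrdef]; linarith
    have hlim : Tendsto (fun n => X (fn n) t) atTop (𝓝 0) := by
      have heq : (fun n => X (fn n) t) = fun n => ((qr t : ℝ):ℂ)^n * X f₀ t :=
        funext fun n => hL2 n t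
      rw [heq]
      have h1 : Tendsto (fun n : ℕ => ((qr t : ℝ):ℂ)^n) atTop (𝓝 0) := by
        rw [tendsto_zero_iff_norm_tendsto_zero]
        simp only [norm_pow, Complex.norm_real, Real.norm_eq_abs,
          abs_of_nonneg (hqr0 t)]
        exact tendsto_pow_atTop_nhds_zero_of_lt_one (hqr0 t) hlt
      simpa using h1.mul_const (X f₀ t)
    exact tendsto_nhds_unique (hev t) (hlim.comp hφ.tendsto_atTop)
  have hyt₀ : y t₀ = X f₀ t₀ := by
    have hq1 : qr t₀ = 1 := by simp [hqrdef, hsdef]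
    have heq : (fun j => X (fn (φ j)) t₀) = fun _ => X f₀ t₀ := by
      funext j
      rw [hL2 (φ j) t₀, hq1]
      simp
    have := hev t₀
    rw [heq] at this
    exact tendsto_nhds_unique this tendsto_const_nhds
  -- t₀ is not isolated
  have hy0 : y t₀ = 0 := by
    obtain ⟨tk, htkne, htklim⟩ : ∃ tk : ℕ → PosOpI, (∀ k, tk k ≠ t₀) ∧
        Tendsto tk atTop (𝓝 t₀) := by
      have hdivlim : ∀ c : ℝ, Tendsto (fun k : ℕ => c/((k:ℝ)+1)) atTop (𝓝 0) := by
        intro c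
        have := tendsto_one_div_add_atTop_nhds_zero_nat.const_mul c
        simpa [mul_one_div, div_eq_mul_inv] using this
      have hkpos : ∀ k : ℕ, (0:ℝ) < (k:ℝ)+1 := fun k => by positivity
      rcases lt_or_ge s 1 with hs | hs
      · refine ⟨fun k => ⟨s + (1-s)/((k:ℝ)+1), ?_, ?_⟩, ?_, ?_⟩
        · have : 0 < (1-s)/((k:ℝ)+1) := div_pos (by linarith) (hkpos k)
          have := t₀.2.1; simp only [hsdef] at *; linarith
        · have : (1-s)/((k:ℝ)+1) ≤ 1-s := div_le_self (by linarith) (by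
            have := hkpos k; linarith)
          linarith
        · intro k heq
          have := congrArg (fun z : PosOpI => (z:ℝ)) heq
          simp only at this
          have hpos : 0 < (1-s)/((k:ℝ)+1) := div_pos (by linarith) (hkpos k)
          simp only [hsdef] at this; linarith
        · rw [tendsto_subtype_rng]
          have := (hdivlim (1-s)).const_add s
          simpa using this
      · have hs1 : s = 1 := le_antisymm t₀.2.2 hs
        have hspos : 0 < s := by rw [hs1]; norm_num
        refine ⟨fun k => ⟨s - s/((k:ℝ)+1), ?_, ?_⟩, ?_, ?_⟩
        · have : s/((k:ℝ)+1) ≤ s := div_le_self hspos.le (by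
            have := hkpos k; linarith)
          linarith
        · have : 0 < s/((k:ℝ)+1) := div_pos hspos (hkpos k)
          have := t₀.2.2; simp only [hsdef] at *; linarith
        · intro k heq
          have := congrArg (fun z : PosOpI => (z:ℝ)) heq
          simp only at this
          have hpos : 0 < s/((k:ℝ)+1) := div_pos hspos (hkpos k)
          simp only [hsdef] at this; linarith
        · rw [tendsto_subtype_rng]
          have := ((hdivlim s).const_sub s).neg
          simp only [neg_sub, sub_zero] at this
          simpa using (tendsto_const_nhds.sub (hdivlim s) :
            Tendsto (fun k : ℕ => s - s/((k:ℝ)+1)) atTop (𝓝 (s - 0)))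
    have hcomp := (y.continuous.tendsto t₀).comp htklim
    have heq : (fun k => y (tk k)) = fun _ => (0:ℂ) := funext fun k => hyt0 _ (htkne k)
    have : Tendsto (fun k => y (tk k)) atTop (𝓝 (y t₀)) := hcomp
    rw [heq] at this
    exact (tendsto_nhds_unique this tendsto_const_nhds)
  rw [hyt₀] at hy0
  exact ht₀ hy0

end main

/-- For the position operator `(M f)(t) = t f(t)` on `C[0,1]` and a real `λ > 0`, the
subspace `𝒳 = {X : M X = λ X M}` of extended eigenoperators of `M` associated with `λ`
is localizing and contains no nonzero compact operator. -/
theorem position_operator_eigenoperators_localizing_no_compact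
    (M : C(Set.Icc (0:ℝ) 1, ℂ) →L[ℂ] C(Set.Icc (0:ℝ) 1, ℂ))
    (hM : ∀ (f : C(Set.Icc (0:ℝ) 1, ℂ)) (t : Set.Icc (0:ℝ) 1),
      M f t = ((t : ℝ) : ℂ) * f t)
    (l : ℝ) (hl : 0 < l) :
    IsLocalizing {X : C(Set.Icc (0:ℝ) 1, ℂ) →L[ℂ] C(Set.Icc (0:ℝ) 1, ℂ) |
        M ∘L X = (l : ℂ) • (X ∘L M)} ∧
    ∀ X : C(Set.Icc (0:ℝ) 1, ℂ) →L[ℂ] C(Set.Icc (0:ℝ) 1, ℂ),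
      M ∘L X = (l : ℂ) • (X ∘L M) → IsCompactOperator X → X = 0 := by
  constructor
  · obtain ⟨c, r, h1, h2, h3⟩ := partA M hM l hl
    exact ⟨c, r, h1, h2, h3⟩
  · exact partB M hM l hl
end
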